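/- arXiv:2105.06922 — 3 statements merged into one kernel-verified Lean document; each statement's English description precedes it below -/
import Mathlib

section
/- Let s, t ∈ ℝ^n be probability vectors and let U be a unitary n×n complex matrix. Then T_{C^Q}(Uᴴ · diag(s) · U, Uᴴ · diag(t) · U) ≥ (1/2) · max over i ∈ Fin n of (√(s i) − √(t i))². Moreover, equality holds if and only if there exists an index i such that either (for all j ≠ i, s j ≥ t j and t i · t j ≥ s i · s j) or (for all j ≠ i, t j ≥ s j and s i · s j ≥ t i · t j). -/
open Matrix ComplexOrder

/-- A density matrix: positive semidefinite with trace one. -/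
def IsDensityMatrix {k : Type*} [Fintype k] [DecidableEq k] (ρ : Matrix k k ℂ) : Prop :=
  ρ.PosSemidef ∧ ρ.trace = 1

/-- Partial trace over the second factor. -/
noncomputable def trB {m n : ℕ} (R : Matrix (Fin m × Fin n) (Fin m × Fin n) ℂ) :
    Matrix (Fin m) (Fin m) ℂ :=
  Matrix.of fun i j => ∑ p, R (i, p) (j, p)

/-- Partial trace over the first factor. -/
noncomputable def trA {m n : ℕ} (R : Matrix (Fin m × Fin n) (Fin m × Fin n) ℂ) :
    Matrix (Fin n) (Fin n) ℂ :=
  Matrix.of fun p q => ∑ i, R (i, p) (i, q)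

/-- The set of quantum couplings of two density matrices. -/
def QCouplings {m n : ℕ} (ρA : Matrix (Fin m) (Fin m) ℂ) (ρB : Matrix (Fin n) (Fin n) ℂ) :
    Set (Matrix (Fin m × Fin n) (Fin m × Fin n) ℂ) :=
  {R | IsDensityMatrix R ∧ trB R = ρA ∧ trA R = ρB}

/-- The quantum optimal transport cost. -/
noncomputable def QOT {m n : ℕ} (C : Matrix (Fin m × Fin n) (Fin m × Fin n) ℂ)
    (ρA : Matrix (Fin m) (Fin m) ℂ) (ρB : Matrix (Fin n) (Fin n) ℂ) : ℝ :=
  sInf ((fun R => ((C * R).trace).re) '' QCouplings ρA ρB)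

/-- The SWAP matrix on `Fin n × Fin n`. -/
noncomputable def swapM (n : ℕ) : Matrix (Fin n × Fin n) (Fin n × Fin n) ℂ :=
  Matrix.of fun x y => if x.1 = y.2 ∧ x.2 = y.1 then 1 else 0

/-- The quantum cost matrix `C^Q = (1/2) (I - S)`. -/
noncomputable def CQ (n : ℕ) : Matrix (Fin n × Fin n) (Fin n × Fin n) ℂ :=
  (1 / 2 : ℂ) • (1 - swapM n)

/-- Kronecker product of square matrices indexed by `Fin m` and `Fin n`. -/
noncomputable def kron {m n : ℕ} (A : Matrix (Fin m) (Fin m) ℂ)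
    (B : Matrix (Fin n) (Fin n) ℂ) : Matrix (Fin m × Fin n) (Fin m × Fin n) ℂ :=
  Matrix.of fun x y => A x.1 y.1 * B x.2 y.2

namespace QOTAux
open Finset

variable {n : ℕ}

/-- The coherent-overlap functional of a classical coupling. -/

noncomputable def gsum (a : Fin n → Fin n → ℝ) : ℝ :=
  ∑ j, ∑ p, Real.sqrt (a j p * a p j)

/-- A classical coupling. -/

structure IsCoupling (a : Fin n → Fin n → ℝ) (s t : Fin n → ℝ) : Prop where
  nonneg : ∀ j p, 0 ≤ a j p
  row : ∀ j, ∑ p, a j p = s j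
  col : ∀ p, ∑ j, a j p = t p

lemma sqrt_am_gm {u v : ℝ} (hu : 0 ≤ u) (hv : 0 ≤ v) :
    Real.sqrt (u * v) ≤ (u + v) / 2 := by
  rw [show (u + v) / 2 = Real.sqrt (((u + v) / 2) ^ 2) from
    (Real.sqrt_sq (by positivity)).symm]
  exact Real.sqrt_le_sqrt (by nlinarith [sq_nonneg (u - v)])

lemma sqrt_am_gm_eq {u v : ℝ} (hu : 0 ≤ u) (hv : 0 ≤ v)
    (h : Real.sqrt (u * v) = (u + v) / 2) : u = v := by
  have h2 := Real.sq_sqrt (mul_nonneg hu hv)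
  rw [h] at h2
  have h3 : (u - v) ^ 2 = 0 := by nlinarith
  have := pow_eq_zero_iff (n := 2) (by norm_num) |>.mp h3
  linarith

lemma coupling_total {a : Fin n → Fin n → ℝ} {s t : Fin n → ℝ}
    (h : IsCoupling a s t) (hsum : ∑ j, s j = 1) :
    ∑ j, ∑ p, a j p = 1 := by
  rw [← hsum]; exact Finset.sum_congr rfl fun j _ => h.row j

/-- Decomposition facts of a coupling around a fixed index `i`. -/

lemma coupling_erase (a : Fin n → Fin n → ℝ) {s t : Fin n → ℝ}
    (h : IsCoupling a s t) (hsum : ∑ j, s j = 1) (i : Fin n) :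
    (∑ p ∈ univ.erase i, a i p = s i - a i i) ∧
    (∑ j ∈ univ.erase i, a j i = t i - a i i) ∧
    (∑ j ∈ univ.erase i, ∑ p ∈ univ.erase i, a j p = 1 - s i - t i + a i i) := by
  have hrow : ∑ p ∈ univ.erase i, a i p = s i - a i i := by
    have := h.row i
    rw [← Finset.add_sum_erase _ _ (mem_univ i)] at this
    linarith
  have hcol : ∑ j ∈ univ.erase i, a j i = t i - a i i := by
    have := h.col i
    rw [← Finset.add_sum_erase _ _ (mem_univ i)] at this
    linarith
  refine ⟨hrow, hcol, ?_⟩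
  have htot := coupling_total h hsum
  rw [← Finset.add_sum_erase _ (fun j => ∑ p, a j p) (mem_univ i), h.row i] at htot
  have hsplit : ∑ j ∈ univ.erase i, ∑ p, a j p
      = ∑ j ∈ univ.erase i, (a j i + ∑ p ∈ univ.erase i, a j p) := by
    refine Finset.sum_congr rfl fun j _ => ?_
    rw [← Finset.add_sum_erase _ _ (mem_univ i)]
  rw [hsplit, Finset.sum_add_distrib, hcol] at htot
  linarith

lemma gsum_decomp (a : Fin n → Fin n → ℝ) (i : Fin n) (ha : ∀ j p, 0 ≤ a j p) :
    gsum a = a i i + 2 * (∑ p ∈ univ.erase i, Real.sqrt (a i p * a p i))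
      + ∑ j ∈ univ.erase i, ∑ p ∈ univ.erase i, Real.sqrt (a j p * a p j) := by
  rw [gsum, ← Finset.add_sum_erase _ _ (mem_univ i),
    ← Finset.add_sum_erase _ (fun p => Real.sqrt (a i p * a p i)) (mem_univ i)]
  have h1 : Real.sqrt (a i i * a i i) = a i i := Real.sqrt_mul_self (ha i i)
  have h2 : ∑ j ∈ univ.erase i, ∑ p, Real.sqrt (a j p * a p j)
      = ∑ j ∈ univ.erase i, (Real.sqrt (a i j * a j i)
          + ∑ p ∈ univ.erase i, Real.sqrt (a j p * a p j)) := by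
    refine Finset.sum_congr rfl fun j _ => ?_
    rw [← Finset.add_sum_erase _ (fun p => Real.sqrt (a j p * a p j)) (mem_univ i)]
    rw [mul_comm (a j i) (a i j)]
  rw [h1, h2, Finset.sum_add_distrib]
  ring

lemma block_le (a : Fin n → Fin n → ℝ) (i : Fin n) (ha : ∀ j p, 0 ≤ a j p) :
    ∑ j ∈ univ.erase i, ∑ p ∈ univ.erase i, Real.sqrt (a j p * a p j)
      ≤ ∑ j ∈ univ.erase i, ∑ p ∈ univ.erase i, a j p := by
  have h1 : ∑ j ∈ univ.erase i, ∑ p ∈ univ.erase i, Real.sqrt (a j p * a p j)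
      ≤ ∑ j ∈ univ.erase i, ∑ p ∈ univ.erase i, (a j p + a p j) / 2 := by
    refine Finset.sum_le_sum fun j _ => Finset.sum_le_sum fun p _ => ?_
    exact sqrt_am_gm (ha j p) (ha p j)
  have h2 : ∑ j ∈ univ.erase i, ∑ p ∈ univ.erase i, (a j p + a p j) / 2
      = ∑ j ∈ univ.erase i, ∑ p ∈ univ.erase i, a j p := by
    have hswap : ∑ j ∈ univ.erase i, ∑ p ∈ univ.erase i, a p j
        = ∑ j ∈ univ.erase i, ∑ p ∈ univ.erase i, a j p := Finset.sum_comm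
    have heq : ∑ j ∈ univ.erase i, ∑ p ∈ univ.erase i, (a j p + a p j) / 2
        = (∑ j ∈ univ.erase i, ∑ p ∈ univ.erase i, a j p
          + ∑ j ∈ univ.erase i, ∑ p ∈ univ.erase i, a p j) / 2 := by
      simp only [← Finset.sum_add_distrib, Finset.sum_div]
    rw [heq, hswap]; ring
  linarith

/-- key bound for the cross terms at index `i`. -/

lemma key_bound {a : Fin n → Fin n → ℝ} {s t : Fin n → ℝ}
    (h : IsCoupling a s t) (hsum : ∑ j, s j = 1) (i : Fin n) :
    a i i + 2 * (∑ p ∈ univ.erase i, Real.sqrt (a i p * a p i))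
      ≤ 2 * Real.sqrt (s i * t i) - a i i := by
  have ha := h.nonneg
  obtain ⟨hrow, hcol, hblock⟩ := coupling_erase a h hsum i
  have hsi : 0 ≤ s i := by
    rw [← h.row i]; exact Finset.sum_nonneg fun p _ => ha i p
  have hti : 0 ≤ t i := by
    rw [← h.col i]; exact Finset.sum_nonneg fun j _ => ha j i
  have haii : 0 ≤ a i i := ha i i
  rcases eq_or_lt_of_le (mul_nonneg hsi hti) with hz | hpos
  · -- s i * t i = 0 : the whole i-part vanishes
    rcases mul_eq_zero.mp hz.symm with hs0 | ht0
    · have hzrow : ∀ p, a i p = 0 := by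
        intro p
        have h0 : ∑ p, a i p = 0 := by rw [h.row i, hs0]
        exact (Finset.sum_eq_zero_iff_of_nonneg (fun q _ => ha i q)).mp h0 p (mem_univ p)
      have : ∀ p ∈ univ.erase i, Real.sqrt (a i p * a p i) = 0 := by
        intro p _; rw [hzrow p, zero_mul, Real.sqrt_zero]
      rw [Finset.sum_eq_zero this, hzrow i, ← hz]
      simp
    · have hzcol : ∀ j, a j i = 0 := by
        intro j
        have h0 : ∑ j, a j i = 0 := by rw [h.col i, ht0]
        exact (Finset.sum_eq_zero_iff_of_nonneg (fun q _ => ha q i)).mp h0 j (mem_univ j)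
      have : ∀ p ∈ univ.erase i, Real.sqrt (a i p * a p i) = 0 := by
        intro p _; rw [hzcol p, mul_zero, Real.sqrt_zero]
      rw [Finset.sum_eq_zero this, hzcol i, ← hz]
      simp
  · -- s i * t i > 0
    set q := Real.sqrt (s i * t i) with hq
    have hqpos : 0 < q := Real.sqrt_pos.mpr hpos
    have hqsq : q ^ 2 = s i * t i := Real.sq_sqrt (le_of_lt hpos)
    have hAM : 2 * q ≤ s i + t i := by
      have := sqrt_am_gm hsi hti
      rw [← hq] at this; linarith
    have hcross : ∀ p ∈ univ.erase i,
        q * (2 * Real.sqrt (a i p * a p i)) ≤ t i * a i p + s i * a p i := by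
      intro p _
      have h1 : q * Real.sqrt (a i p * a p i)
          = Real.sqrt ((t i * a i p) * (s i * a p i)) := by
        rw [hq, ← Real.sqrt_mul (mul_nonneg hsi hti)]
        congr 1; ring
      have h2 := sqrt_am_gm (mul_nonneg hti (ha i p)) (mul_nonneg hsi (ha p i))
      rw [← h1] at h2; linarith
    have hsumcross : q * (2 * ∑ p ∈ univ.erase i, Real.sqrt (a i p * a p i))
        ≤ 2 * (s i * t i) - (s i + t i) * a i i := by
      have h1 : ∑ p ∈ univ.erase i, q * (2 * Real.sqrt (a i p * a p i))
          ≤ ∑ p ∈ univ.erase i, (t i * a i p + s i * a p i) :=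
        Finset.sum_le_sum hcross
      have h2 : q * (2 * ∑ p ∈ univ.erase i, Real.sqrt (a i p * a p i))
          = ∑ p ∈ univ.erase i, q * (2 * Real.sqrt (a i p * a p i)) := by
        rw [Finset.mul_sum, Finset.mul_sum]
      have h3 : ∑ p ∈ univ.erase i, (t i * a i p + s i * a p i)
          = t i * (s i - a i i) + s i * (t i - a i i) := by
        rw [Finset.sum_add_distrib, ← Finset.mul_sum, ← Finset.mul_sum, hrow, hcol]
      rw [h3] at h1
      rw [h2]
      exact h1.trans_eq (by ring)
    have hCnn : 0 ≤ ∑ p ∈ univ.erase i, Real.sqrt (a i p * a p i) :=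
      Finset.sum_nonneg fun p _ => Real.sqrt_nonneg _
    nlinarith [hsumcross, mul_nonneg haii (sub_nonneg.mpr hAM), hqpos, hqsq, hCnn,
      mul_pos hqpos hqpos]

/-- The key classical upper bound. -/

lemma gsum_le {a : Fin n → Fin n → ℝ} {s t : Fin n → ℝ}
    (h : IsCoupling a s t) (hsum : ∑ j, s j = 1) (i : Fin n) :
    gsum a ≤ 1 - (Real.sqrt (s i) - Real.sqrt (t i)) ^ 2 := by
  have ha := h.nonneg
  obtain ⟨hrow, hcol, hblock⟩ := coupling_erase a h hsum i
  have hsi : 0 ≤ s i := by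
    rw [← h.row i]; exact Finset.sum_nonneg fun p _ => ha i p
  have hti : 0 ≤ t i := by
    rw [← h.col i]; exact Finset.sum_nonneg fun j _ => ha j i
  have haii : 0 ≤ a i i := ha i i
  have hsq_s := Real.sq_sqrt hsi
  have hsq_t := Real.sq_sqrt hti
  have hst : Real.sqrt (s i) * Real.sqrt (t i) = Real.sqrt (s i * t i) :=
    (Real.sqrt_mul hsi _).symm
  have hgoal : 1 - (Real.sqrt (s i) - Real.sqrt (t i)) ^ 2
      = 1 - s i - t i + 2 * Real.sqrt (s i * t i) := by
    rw [← hst]; linear_combination - hsq_s - hsq_t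
  rw [hgoal, gsum_decomp a i ha]
  have hT2 := block_le a i ha
  have hkey := key_bound h hsum i
  linarith

lemma sum_eq_termwise {α : Type*} {s : Finset α} {f g : α → ℝ}
    (hle : ∀ i ∈ s, f i ≤ g i) (heq : ∑ i ∈ s, f i = ∑ i ∈ s, g i) :
    ∀ i ∈ s, f i = g i := by
  intro i hi
  by_contra hne
  have hlt := Finset.sum_lt_sum hle ⟨i, hi, lt_of_le_of_ne (hle i hi) hne⟩
  linarith

lemma IsCoupling.transpose {a : Fin n → Fin n → ℝ} {s t : Fin n → ℝ}
    (h : IsCoupling a s t) : IsCoupling (fun j p => a p j) t s :=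
  ⟨fun j p => h.nonneg p j, h.col, h.row⟩

lemma gsum_transpose (a : Fin n → Fin n → ℝ) : gsum (fun j p => a p j) = gsum a := by
  rw [gsum, gsum]
  exact Finset.sum_comm

/-- Inequality of square-root differences from the product condition. -/

lemma sqrt_sub_le {X Y u v : ℝ} (hX : 0 ≤ X) (hY : 0 ≤ Y) (hu : 0 ≤ u) (hv : 0 ≤ v)
    (huv : u ≤ v) (h1 : v ^ 2 - u ^ 2 ≤ X ^ 2 - Y ^ 2) (h2 : Y * v ≤ X * u) :
    v - u ≤ X - Y := by
  by_contra hc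
  push_neg at hc
  have hvsq : u ^ 2 ≤ v ^ 2 := by nlinarith
  have hXY : Y ≤ X := by
    by_contra hly
    push_neg at hly
    have : X ^ 2 < Y ^ 2 := by nlinarith
    nlinarith
  have hvu : u < v := by
    rcases eq_or_lt_of_le huv with h | h
    · rw [h] at hc; exfalso; linarith
    · exact h
  have hXYpos : 0 < X + Y := by
    rcases eq_or_lt_of_le (by positivity : (0:ℝ) ≤ X + Y) with h | h
    · exfalso
      have hX0 : X = 0 := by linarith
      have hY0 : Y = 0 := by linarith
      nlinarith
    · exact h
  have e1 : (v - u) * (v + u) ≤ (X - Y) * (X + Y) := by nlinarith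
  have e2 : (X - Y) * (X + Y) < (v - u) * (X + Y) :=
    mul_lt_mul_of_pos_right hc hXYpos
  have hup : v + u < X + Y :=
    lt_of_mul_lt_mul_left (lt_of_le_of_lt e1 e2) (sub_nonneg.mpr hvu.le)
  have huY : u < Y := by linarith
  have hupos : 0 < u := by
    rcases eq_or_lt_of_le hu with h | h
    · exfalso
      rw [← h] at h2
      simp only [mul_zero] at h2
      nlinarith [mul_pos (lt_of_le_of_lt hu huY) (lt_of_le_of_lt hu hvu)]
    · exact h
  nlinarith [h2, mul_pos (sub_pos.mpr huY) (sub_pos.mpr hvu),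
    mul_lt_mul_of_pos_left hc hupos]

lemma erase_sums {s : Fin n → ℝ} (hs1 : ∑ j, s j = 1) (i : Fin n) :
    ∑ j ∈ univ.erase i, s j = 1 - s i := by
  have := Finset.add_sum_erase univ s (mem_univ i)
  linarith

/-- the condition at `i` implies `t i ≤ s i`. -/

lemma cond_ts {s t : Fin n → ℝ}
    (hs1 : ∑ j, s j = 1) (ht1 : ∑ j, t j = 1) (i : Fin n)
    (hcond : ∀ j, j ≠ i → s j ≤ t j) : t i ≤ s i := by
  have h1 : ∑ j ∈ univ.erase i, s j ≤ ∑ j ∈ univ.erase i, t j :=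
    Finset.sum_le_sum fun j hj => hcond j (Finset.ne_of_mem_erase hj)
  rw [erase_sums hs1 i, erase_sums ht1 i] at h1
  linarith

/-- The condition at `i` implies that `i` attains the maximum. -/

lemma cond_implies_max {s t : Fin n → ℝ} (hs0 : ∀ j, 0 ≤ s j) (ht0 : ∀ j, 0 ≤ t j)
    (hs1 : ∑ j, s j = 1) (ht1 : ∑ j, t j = 1) (i : Fin n)
    (hcond : ∀ j, j ≠ i → s j ≤ t j ∧ t i * t j ≤ s i * s j) (j : Fin n) :
    (Real.sqrt (s j) - Real.sqrt (t j)) ^ 2 ≤ (Real.sqrt (s i) - Real.sqrt (t i)) ^ 2 := by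
  rcases eq_or_ne j i with rfl | hj
  · exact le_refl _
  · have hts : t i ≤ s i := cond_ts hs1 ht1 i fun k hk => (hcond k hk).1
    have h1 : t j - s j ≤ s i - t i := by
      have hmem : j ∈ univ.erase i := Finset.mem_erase.mpr ⟨hj, mem_univ j⟩
      have hle := Finset.single_le_sum
        (f := fun k => t k - s k)
        (fun k hk => sub_nonneg.mpr (hcond k (Finset.ne_of_mem_erase hk)).1) hmem
      have hle' : t j - s j ≤ ∑ x ∈ univ.erase i, (t x - s x) := hle
      have : ∑ k ∈ univ.erase i, (t k - s k) = s i - t i := by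
        rw [Finset.sum_sub_distrib, erase_sums hs1 i, erase_sums ht1 i]
        ring
      linarith
    have hsq : ∀ x : ℝ, 0 ≤ x → Real.sqrt x ^ 2 = x := fun x hx => Real.sq_sqrt hx
    have hA : Real.sqrt (t j) - Real.sqrt (s j) ≤ Real.sqrt (s i) - Real.sqrt (t i) := by
      refine sqrt_sub_le (Real.sqrt_nonneg (s i)) (Real.sqrt_nonneg (t i)) (Real.sqrt_nonneg (s j))
        (Real.sqrt_nonneg (t j)) (Real.sqrt_le_sqrt (hcond j hj).1) ?_ ?_
      · rw [hsq _ (ht0 j), hsq _ (hs0 j), hsq _ (hs0 i), hsq _ (ht0 i)]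
        exact h1
      · rw [← Real.sqrt_mul (ht0 i), ← Real.sqrt_mul (hs0 i)]
        exact Real.sqrt_le_sqrt (hcond j hj).2
    have h0 : 0 ≤ Real.sqrt (t j) - Real.sqrt (s j) :=
      sub_nonneg.mpr (Real.sqrt_le_sqrt (hcond j hj).1)
    nlinarith [hA, h0]

/-- Existence of an optimal classical coupling under the structure condition. -/

lemma exists_optimal_coupling {s t : Fin n → ℝ}
    (hs0 : ∀ j, 0 ≤ s j) (ht0 : ∀ j, 0 ≤ t j)
    (hs1 : ∑ j, s j = 1) (ht1 : ∑ j, t j = 1) (i : Fin n)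
    (hcond : ∀ j, j ≠ i → s j ≤ t j ∧ t i * t j ≤ s i * s j) :
    ∃ a : Fin n → Fin n → ℝ, IsCoupling a s t ∧
      gsum a = 1 - (Real.sqrt (s i) - Real.sqrt (t i)) ^ 2 := by
  have hts : t i ≤ s i := cond_ts hs1 ht1 i fun k hk => (hcond k hk).1
  rcases eq_or_lt_of_le hts with heq | hlt
  · -- `s = t` : use the diagonal coupling
    have hst : ∀ j, s j = t j := by
      intro j
      rcases eq_or_ne j i with rfl | hj
      · exact heq.symm
      · have hzero : ∑ k ∈ univ.erase i, (t k - s k) = 0 := by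
          rw [Finset.sum_sub_distrib, erase_sums hs1 i, erase_sums ht1 i, heq]
          ring
        have hmem : j ∈ univ.erase i := Finset.mem_erase.mpr ⟨hj, mem_univ j⟩
        have := (Finset.sum_eq_zero_iff_of_nonneg
          (fun k hk => sub_nonneg.mpr (hcond k (Finset.ne_of_mem_erase hk)).1)).mp hzero j hmem
        linarith
    refine ⟨fun j p => if j = p then s j else 0, ⟨?_, ?_, ?_⟩, ?_⟩
    · intro j p; split_ifs
      · exact hs0 j
      · exact le_refl 0
    · intro j; simp
    · intro p; simp [Finset.sum_ite_eq']; exact hst p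
    · have hpt : ∀ j p : Fin n,
          Real.sqrt ((if j = p then s j else 0) * (if p = j then s p else 0))
            = if j = p then s j else 0 := by
        intro j p
        rcases eq_or_ne j p with rfl | hjp
        · simp [Real.sqrt_mul_self (hs0 j)]
        · simp [hjp, Ne.symm hjp]
      rw [gsum]
      calc ∑ j, ∑ p, Real.sqrt ((if j = p then s j else 0) * (if p = j then s p else 0))
          = ∑ j, ∑ p, (if j = p then s j else 0) := by
            exact Finset.sum_congr rfl fun j _ => Finset.sum_congr rfl fun p _ => hpt j p
        _ = ∑ j : Fin n, s j := by simp
        _ = 1 - (Real.sqrt (s i) - Real.sqrt (t i)) ^ 2 := by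
            rw [hs1, ← hst i]; simp
  · -- main case `t i < s i`
    set d := s i - t i with hd_def
    have hd : 0 < d := by simp [hd_def]; linarith
    have hdne : d ≠ 0 := ne_of_gt hd
    set c : Fin n → ℝ := fun p => (t p - s p) / d with hc_def
    set X : Fin n → ℝ := fun j => (s i * s j - t i * t j) / d with hX_def
    have hc0 : ∀ p, p ≠ i → 0 ≤ c p := fun p hp =>
      div_nonneg (sub_nonneg.mpr (hcond p hp).1) (le_of_lt hd)
    have hX0 : ∀ j, j ≠ i → 0 ≤ X j := fun j hj =>
      div_nonneg (sub_nonneg.mpr (hcond j hj).2) (le_of_lt hd)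
    have hcsum : ∑ p ∈ univ.erase i, c p = 1 := by
      rw [hc_def]
      rw [← Finset.sum_div, Finset.sum_sub_distrib, erase_sums hs1 i, erase_sums ht1 i]
      field_simp
      linarith
    set a : Fin n → Fin n → ℝ := fun j p =>
      if j = i then (if p = i then 0 else s i * c p)
      else if p = i then t i * c j
      else if j = p then X j else 0 with ha_def
    have hrow : ∀ j, ∑ p, a j p = s j := by
      intro j
      rcases eq_or_ne j i with rfl | hj
      · rw [← Finset.add_sum_erase _ _ (mem_univ j)]
        have h1 : a j j = 0 := by simp [ha_def]
        have h2 : ∑ p ∈ univ.erase j, a j p = ∑ p ∈ univ.erase j, s j * c p := by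
          refine Finset.sum_congr rfl fun p hp => ?_
          simp [ha_def, Finset.ne_of_mem_erase hp]
        rw [h1, h2, ← Finset.mul_sum, hcsum, zero_add, mul_one]
      · rw [← Finset.add_sum_erase _ _ (mem_univ i)]
        have h1 : a j i = t i * c j := by simp [ha_def, hj]
        have h2 : ∑ p ∈ univ.erase i, a j p
            = ∑ p ∈ univ.erase i, (if j = p then X j else 0) := by
          refine Finset.sum_congr rfl fun p hp => ?_
          simp [ha_def, hj, Finset.ne_of_mem_erase hp]
        have h3 : ∑ p ∈ univ.erase i, (if j = p then X j else 0) = X j := by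
          rw [Finset.sum_ite_eq]
          simp [Finset.mem_erase, hj]
        rw [h1, h2, h3, hc_def, hX_def]
        field_simp
        ring
    have hcol : ∀ p, ∑ j, a j p = t p := by
      intro p
      rcases eq_or_ne p i with rfl | hp
      · rw [← Finset.add_sum_erase _ _ (mem_univ p)]
        have h1 : a p p = 0 := by simp [ha_def]
        have h2 : ∑ j ∈ univ.erase p, a j p = ∑ j ∈ univ.erase p, t p * c j := by
          refine Finset.sum_congr rfl fun j hj => ?_
          simp [ha_def, Finset.ne_of_mem_erase hj]
        rw [h1, h2, ← Finset.mul_sum, hcsum, zero_add, mul_one]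
      · rw [← Finset.add_sum_erase _ _ (mem_univ i)]
        have h1 : a i p = s i * c p := by simp [ha_def, hp]
        have h2 : ∑ j ∈ univ.erase i, a j p
            = ∑ j ∈ univ.erase i, (if j = p then X j else 0) := by
          refine Finset.sum_congr rfl fun j hj => ?_
          simp [ha_def, hp, Finset.ne_of_mem_erase hj]
        have h3 : ∑ j ∈ univ.erase i, (if j = p then X j else 0) = X p := by
          rw [Finset.sum_ite_eq']
          simp [Finset.mem_erase, hp]
        rw [h1, h2, h3, hc_def, hX_def]
        field_simp
        ring
    refine ⟨a, ⟨?_, hrow, hcol⟩, ?_⟩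
    · intro j p
      by_cases hj : j = i
      · by_cases hp : p = i
        · simp [ha_def, hj, hp]
        · simp only [ha_def, hj, if_pos rfl, if_neg hp]
          exact mul_nonneg (hs0 i) (hc0 p hp)
      · by_cases hp : p = i
        · simp only [ha_def, hp, if_neg hj, if_pos rfl]
          exact mul_nonneg (ht0 i) (hc0 j hj)
        · simp only [ha_def, if_neg hj, if_neg hp]
          split_ifs with hjp
          · exact hX0 j hj
          · exact le_refl 0
    · -- value of gsum
      have hq0 : 0 ≤ s i * t i := mul_nonneg (hs0 i) (ht0 i)
      set q := Real.sqrt (s i * t i) with hq_def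
      have hpt : ∀ j p : Fin n, Real.sqrt (a j p * a p j)
          = (if j = i then (if p = i then 0 else q * c p)
             else if p = i then q * c j
             else if j = p then X j else 0) := by
        intro j p
        by_cases hj : j = i
        · by_cases hp : p = i
          · simp [ha_def, hj, hp]
          · have h1 : a j p = s i * c p := by simp [ha_def, hj, hp]
            have h2 : a p j = t i * c p := by simp [ha_def, hj, hp]
            rw [h1, h2, hj, if_pos rfl, if_neg hp]
            have h3 : s i * c p * (t i * c p) = (s i * t i) * (c p * c p) := by ring
            rw [h3, Real.sqrt_mul hq0, Real.sqrt_mul_self (hc0 p hp), hq_def]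
        · by_cases hp : p = i
          · have h1 : a j p = t i * c j := by simp [ha_def, hj, hp]
            have h2 : a p j = s i * c j := by simp [ha_def, hj, hp]
            rw [h1, h2, if_neg hj, hp, if_pos rfl]
            have h3 : t i * c j * (s i * c j) = (s i * t i) * (c j * c j) := by ring
            rw [h3, Real.sqrt_mul hq0, Real.sqrt_mul_self (hc0 j hj), hq_def]
          · by_cases hjp : j = p
            · have h1 : a j p = X j := by simp [ha_def, hj, hp, hjp]
              have h2 : a p j = X j := by
                simp only [ha_def, ← hjp]
                simp [hj, hp]
              rw [h1, h2, if_neg hj, if_neg hp, if_pos hjp]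
              exact Real.sqrt_mul_self (hX0 j hj)
            · have h1 : a j p = 0 := by simp [ha_def, hj, hp, hjp]
              rw [h1, if_neg hj, if_neg hp, if_neg hjp, zero_mul, Real.sqrt_zero]
      rw [gsum]
      rw [show (∑ j, ∑ p, Real.sqrt (a j p * a p j))
          = ∑ j, ∑ p, (if j = i then (if p = i then 0 else q * c p)
             else if p = i then q * c j
             else if j = p then X j else 0) from
        Finset.sum_congr rfl fun j _ => Finset.sum_congr rfl fun p _ => hpt j p]
      rw [← Finset.add_sum_erase _ _ (mem_univ i)]
      have hrowi : ∑ p, (if i = i then (if p = i then 0 else q * c p)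
             else if p = i then q * c i
             else if i = p then X i else 0) = q := by
        have hpt2 : ∀ p : Fin n, (if i = i then (if p = i then 0 else q * c p)
             else if p = i then q * c i else if i = p then X i else 0)
             = (if p = i then 0 else q * c p) := fun p => if_pos rfl
        rw [Finset.sum_congr rfl fun p _ => hpt2 p]
        rw [← Finset.add_sum_erase _ _ (mem_univ i), if_pos rfl, zero_add]
        have h5 : ∑ p ∈ univ.erase i, (if p = i then 0 else q * c p)
            = ∑ p ∈ univ.erase i, q * c p :=
          Finset.sum_congr rfl fun p hp => if_neg (Finset.ne_of_mem_erase hp)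
        rw [h5, ← Finset.mul_sum, hcsum, mul_one]
      have hrowj : ∀ j ∈ univ.erase i,
          (∑ p, (if j = i then (if p = i then 0 else q * c p)
             else if p = i then q * c j
             else if j = p then X j else 0)) = q * c j + X j := by
        intro j hj
        have hjne := Finset.ne_of_mem_erase hj
        rw [← Finset.add_sum_erase _ _ (mem_univ i)]
        rw [if_neg hjne, if_pos rfl]
        congr 1
        have h2 : ∑ p ∈ univ.erase i, (if j = i then (if p = i then 0 else q * c p)
             else if p = i then q * c j
             else if j = p then X j else 0)
            = ∑ p ∈ univ.erase i, (if j = p then X j else 0) := by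
          refine Finset.sum_congr rfl fun p hp => ?_
          rw [if_neg hjne, if_neg (Finset.ne_of_mem_erase hp)]
        rw [h2, Finset.sum_ite_eq]
        simp [Finset.mem_erase, hjne]
      rw [hrowi, Finset.sum_congr rfl hrowj, Finset.sum_add_distrib, ← Finset.mul_sum, hcsum]
      have hXsum : ∑ j ∈ univ.erase i, X j = (s i * (1 - s i) - t i * (1 - t i)) / d := by
        rw [hX_def]
        rw [← Finset.sum_div]
        congr 1
        rw [Finset.sum_sub_distrib, ← Finset.mul_sum, ← Finset.mul_sum,
          erase_sums hs1 i, erase_sums ht1 i]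
      rw [hXsum]
      have hA := Real.sq_sqrt (hs0 i)
      have hB := Real.sq_sqrt (ht0 i)
      have hAB : Real.sqrt (s i) * Real.sqrt (t i) = q := (Real.sqrt_mul (hs0 i) _).symm
      have hfin : (1 : ℝ) - (Real.sqrt (s i) - Real.sqrt (t i)) ^ 2
          = 1 - s i - t i + 2 * q := by
        rw [← hAB]; linear_combination - hA - hB
      rw [hfin, hd_def]
      have hne : s i - t i ≠ 0 := ne_of_gt (sub_pos.mpr hlt)
      field_simp
      ring

variable {k : Type*} [Fintype k] [DecidableEq k]

lemma psd_diag {M : Matrix k k ℂ} (hM : M.PosSemidef) (x : k) :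
    0 ≤ (M x x).re ∧ (M x x).im = 0 := by
  set u : k → ℂ := fun i => if i = x then 1 else 0 with hu_def
  have h := (posSemidef_iff_dotProduct_mulVec.mp hM).2 u
  have hq : star u ⬝ᵥ (M *ᵥ u) = M x x := by
    have hinner : ∀ i, (M *ᵥ u) i = M i x := by
      intro i
      show ∑ j, M i j * u j = M i x
      rw [hu_def]
      simp only [mul_ite, mul_one, mul_zero]
      rw [Finset.sum_ite_eq' univ x (fun j => M i j)]
      simp
    rw [dotProduct]
    have hcongr : ∀ i, star u i * (M *ᵥ u) i = if i = x then M i x else 0 := by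
      intro i
      rw [hinner i, hu_def]
      simp only [Pi.star_apply]
      split_ifs with h1
      · simp
      · simp
    rw [Finset.sum_congr rfl fun i _ => hcongr i,
      Finset.sum_ite_eq' univ x (fun i => M i x)]
    simp
  rw [hq, Complex.le_def] at h
  simpa using ⟨h.1, h.2.symm⟩

lemma psd_entry_sq_le {M : Matrix k k ℂ} (hM : M.PosSemidef) (x y : k) :
    ‖M x y‖ ^ 2 ≤ (M x x).re * (M y y).re := by
  obtain ⟨hxx, hxxim⟩ := psd_diag hM x
  obtain ⟨hyy, hyyim⟩ := psd_diag hM y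
  rcases eq_or_ne x y with rfl | hxy
  · rw [Complex.sq_norm, Complex.normSq_apply, hxxim]
    nlinarith
  rcases eq_or_ne (M x y) 0 with hz | hz
  · rw [hz]
    simpa using mul_nonneg hxx hyy
  set z := M x y with hz_def
  set m := ‖z‖ with hm_def
  have hmpos : 0 < m := norm_pos_iff.mpr hz
  set ω : ℂ := -(starRingEnd ℂ) z / (m : ℂ) with hω_def
  have hmne : (m : ℂ) ≠ 0 := by
    simpa using ne_of_gt hmpos
  have hzω : z * ω = -(m : ℂ) := by
    rw [hω_def]
    field_simp
    rw [Complex.mul_conj]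
    norm_cast
    rw [Complex.normSq_eq_norm_sq, ← hm_def]
  have habsω : ‖ω‖ = 1 := by
    rw [hω_def, norm_div, norm_neg, Complex.norm_conj, Complex.norm_real, Real.norm_eq_abs,
      abs_of_pos hmpos, ← hm_def, div_self (ne_of_gt hmpos)]
  have hωconj : (starRingEnd ℂ) ω * ω = 1 := by
    have h2 : ω * (starRingEnd ℂ) ω = ↑(Complex.normSq ω) := Complex.mul_conj ω
    rw [mul_comm] at h2
    rw [h2, Complex.normSq_eq_norm_sq, habsω]
    norm_num
  have hyx : M y x = (starRingEnd ℂ) z := by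
    have h := congrFun (congrFun hM.1 x) y
    rw [conjTranspose_apply] at h
    calc M y x = star (star (M y x)) := (star_star _).symm
      _ = star (M x y) := by rw [h]
      _ = (starRingEnd ℂ) z := by rw [← hz_def, starRingEnd_apply]
  have hre : ∀ r : ℝ, 0 ≤ (M x x).re * (r * r) + (-(2 * m)) * r + (M y y).re := by
    intro r
    set v : k → ℂ := fun i => if i = x then (r : ℂ) else if i = y then ω else 0 with hv_def
    have hinner : ∀ i, (M *ᵥ v) i = M i x * r + M i y * ω := by
      intro i
      show ∑ j, M i j * v j = _
      rw [hv_def]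
      rw [← Finset.add_sum_erase _ _ (mem_univ x)]
      simp only [if_pos rfl]
      congr 1
      have h2 : ∀ j ∈ univ.erase x, M i j * (if j = x then (r:ℂ) else if j = y then ω else 0)
          = (if j = y then M i y * ω else 0) := by
        intro j hj
        rw [if_neg (Finset.ne_of_mem_erase hj)]
        split_ifs with h
        · rw [h]
        · simp
      rw [Finset.sum_congr rfl h2, Finset.sum_ite_eq' (univ.erase x) y (fun _ => M i y * ω)]
      simp [Finset.mem_erase, Ne.symm hxy]
    have houter : star v ⬝ᵥ (M *ᵥ v)
        = (r : ℂ) * (M x x * r + M x y * ω) + (starRingEnd ℂ) ω * (M y x * r + M y y * ω) := by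
      rw [dotProduct]
      have hcongr : ∀ i, star v i * (M *ᵥ v) i
          = (if i = x then (r : ℂ) * (M i x * r + M i y * ω)
             else if i = y then (starRingEnd ℂ) ω * (M i x * r + M i y * ω) else 0) := by
        intro i
        rw [hinner i]
        rw [hv_def]
        simp only [Pi.star_apply]
        split_ifs with h1 h2
        · simp
        · rw [starRingEnd_apply]
        · simp
      rw [Finset.sum_congr rfl fun i _ => hcongr i]
      rw [← Finset.add_sum_erase _ _ (mem_univ x)]
      simp only [if_pos rfl]
      congr 1
      have h2 : ∀ j ∈ univ.erase x,
          (if j = x then (r : ℂ) * (M j x * r + M j y * ω)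
             else if j = y then (starRingEnd ℂ) ω * (M j x * r + M j y * ω) else 0)
          = (if j = y then (starRingEnd ℂ) ω * (M y x * r + M y y * ω) else 0) := by
        intro j hj
        rw [if_neg (Finset.ne_of_mem_erase hj)]
        split_ifs with h
        · rw [h]
        · rfl
      rw [Finset.sum_congr rfl h2, Finset.sum_ite_eq' (univ.erase x) y
        (fun _ => (starRingEnd ℂ) ω * (M y x * r + M y y * ω))]
      simp [Finset.mem_erase, Ne.symm hxy]
    have h0 := (posSemidef_iff_dotProduct_mulVec.mp hM).2 v
    rw [houter] at h0
    have h3 : (starRingEnd ℂ) z * (starRingEnd ℂ) ω = -(m:ℂ) := by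
      rw [← _root_.map_mul, hzω, _root_.map_neg, Complex.conj_ofReal]
    have hALG : (r : ℂ) * (M x x * r + M x y * ω) + (starRingEnd ℂ) ω * (M y x * r + M y y * ω)
        = (r:ℂ)*(r:ℂ)*(M x x) - 2*(m:ℂ)*(r:ℂ) + M y y := by
      rw [hyx, ← hz_def]
      linear_combination (r:ℂ) * hzω + (r:ℂ) * h3 + (M y y) * hωconj
    rw [hALG, Complex.le_def] at h0
    have hre2 := h0.1
    simp only [Complex.zero_re, Complex.add_re, Complex.sub_re, Complex.mul_re,
      Complex.mul_im, Complex.ofReal_re, Complex.ofReal_im, hxxim,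
      Complex.re_ofNat, Complex.im_ofNat,
      mul_zero, zero_mul, sub_zero, zero_add, add_zero] at hre2
    nlinarith [hre2]
  have hd := discrim_le_zero hre
  rw [discrim] at hd
  nlinarith [hd]

/-- bound of the real part of an off-diagonal entry by the geometric mean of
the diagonal. -/

lemma psd_re_entry_le {M : Matrix k k ℂ} (hM : M.PosSemidef) (x y : k) :
    (M x y).re ≤ Real.sqrt ((M x x).re * (M y y).re) := by
  have h1 := psd_entry_sq_le hM x y
  have h2 : (M x y).re ≤ ‖M x y‖ := Complex.re_le_norm _
  have h3 : ‖M x y‖ = Real.sqrt (‖M x y‖ ^ 2) :=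
    (Real.sqrt_sq (norm_nonneg _)).symm
  calc (M x y).re ≤ ‖M x y‖ := h2
    _ = Real.sqrt (‖M x y‖ ^ 2) := h3
    _ ≤ Real.sqrt ((M x x).re * (M y y).re) := Real.sqrt_le_sqrt h1

lemma swapM_apply (x y : Fin n × Fin n) :
    swapM n x y = if y = x.swap then 1 else 0 := by
  show (if x.1 = y.2 ∧ x.2 = y.1 then (1:ℂ) else 0) = _
  congr 1
  simp only [Prod.ext_iff, Prod.fst_swap, Prod.snd_swap, eq_iff_iff]
  constructor
  · rintro ⟨h1, h2⟩; exact ⟨h2.symm, h1.symm⟩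
  · rintro ⟨h1, h2⟩; exact ⟨h2.symm, h1.symm⟩

lemma trace_swap_mul (R : Matrix (Fin n × Fin n) (Fin n × Fin n) ℂ) :
    (swapM n * R).trace = ∑ x, R x.swap x := by
  rw [Matrix.trace]
  refine Finset.sum_congr rfl fun x _ => ?_
  rw [Matrix.diag]
  rw [Matrix.mul_apply]
  have h1 : ∀ y, swapM n x y * R y x = (if y = x.swap then R y x else 0) := by
    intro y
    rw [swapM_apply]
    split_ifs with h
    · rw [one_mul]
    · rw [zero_mul]
  rw [Finset.sum_congr rfl fun y _ => h1 y,
    Finset.sum_ite_eq' univ x.swap (fun y => R y x)]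
  simp

lemma cost_formula (R : Matrix (Fin n × Fin n) (Fin n × Fin n) ℂ) :
    ((CQ n * R).trace).re = (1/2) * ((R.trace).re - (∑ x, R x.swap x).re) := by
  rw [CQ, smul_mul_assoc, Matrix.trace_smul, sub_mul, one_mul, Matrix.trace_sub,
    trace_swap_mul]
  rw [smul_eq_mul, Complex.mul_re]
  simp [Complex.sub_re]

/-- The quantum coupling built from a classical coupling, with maximal coherences. -/

noncomputable def Rmat (a : Fin n → Fin n → ℝ) :
    Matrix (Fin n × Fin n) (Fin n × Fin n) ℂ :=
  Matrix.of fun x y =>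
    if y = x then ((a x.1 x.2 : ℝ) : ℂ)
    else if y = x.swap then ((Real.sqrt (a x.1 x.2 * a y.1 y.2) : ℝ) : ℂ) else 0

lemma Rmat_apply (a : Fin n → Fin n → ℝ) (x y : Fin n × Fin n) :
    Rmat a x y = if y = x then ((a x.1 x.2 : ℝ) : ℂ)
    else if y = x.swap then ((Real.sqrt (a x.1 x.2 * a y.1 y.2) : ℝ) : ℂ) else 0 := rfl

lemma Rmat_trace {a : Fin n → Fin n → ℝ} {s t : Fin n → ℝ}
    (h : IsCoupling a s t) (hs1 : ∑ j, s j = 1) : (Rmat a).trace = 1 := by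
  rw [Matrix.trace]
  have h1 : ∀ x : Fin n × Fin n, (Rmat a).diag x = ((a x.1 x.2 : ℝ) : ℂ) := by
    intro x
    rw [Matrix.diag, Rmat_apply, if_pos rfl]
  rw [Finset.sum_congr rfl fun x _ => h1 x]
  rw [Fintype.sum_prod_type]
  norm_cast
  rw [show ∑ j, ∑ p, a j p = 1 from by
    rw [← hs1]; exact Finset.sum_congr rfl fun j _ => h.row j]

lemma Rmat_trB {a : Fin n → Fin n → ℝ} {s t : Fin n → ℝ}
    (h : IsCoupling a s t) :
    trB (Rmat a) = Matrix.diagonal (fun i => (s i : ℂ)) := by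
  ext i j
  show (∑ p, Rmat a (i, p) (j, p)) = Matrix.diagonal (fun i => (s i : ℂ)) i j
  rcases eq_or_ne i j with rfl | hij
  · rw [Matrix.diagonal_apply_eq]
    have h1 : ∀ p, Rmat a (i, p) (i, p) = ((a i p : ℝ) : ℂ) := fun p => by
      rw [Rmat_apply, if_pos rfl]
    rw [Finset.sum_congr rfl fun p _ => h1 p]
    norm_cast
    exact h.row i
  · rw [Matrix.diagonal_apply_ne _ (Ne.symm (Ne.symm hij))]
    have h1 : ∀ p, Rmat a (i, p) (j, p) = 0 := by
      intro p
      rw [Rmat_apply]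
      rw [if_neg (fun hc => hij (congrArg Prod.fst hc).symm)]
      rw [if_neg (fun hc =>
        hij (((congrArg Prod.fst hc).trans (congrArg Prod.snd hc)).symm))]
    rw [Finset.sum_congr rfl fun p _ => h1 p, Finset.sum_const_zero]

lemma Rmat_trA {a : Fin n → Fin n → ℝ} {s t : Fin n → ℝ}
    (h : IsCoupling a s t) :
    trA (Rmat a) = Matrix.diagonal (fun p => (t p : ℂ)) := by
  ext p q
  show (∑ i, Rmat a (i, p) (i, q)) = Matrix.diagonal (fun p => (t p : ℂ)) p q
  rcases eq_or_ne p q with rfl | hpq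
  · rw [Matrix.diagonal_apply_eq]
    have h1 : ∀ i, Rmat a (i, p) (i, p) = ((a i p : ℝ) : ℂ) := fun i => by
      rw [Rmat_apply, if_pos rfl]
    rw [Finset.sum_congr rfl fun i _ => h1 i]
    norm_cast
    exact h.col p
  · rw [Matrix.diagonal_apply_ne _ (Ne.symm (Ne.symm hpq))]
    have h1 : ∀ i, Rmat a (i, p) (i, q) = 0 := by
      intro i
      rw [Rmat_apply]
      rw [if_neg (fun hc => hpq (congrArg Prod.snd hc).symm)]
      rw [if_neg (fun hc =>
        hpq (((congrArg Prod.snd hc).trans (congrArg Prod.fst hc)).symm))]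
    rw [Finset.sum_congr rfl fun i _ => h1 i, Finset.sum_const_zero]

lemma Rmat_swap_sum {a : Fin n → Fin n → ℝ} (ha : ∀ j p, 0 ≤ a j p) :
    ∑ x : Fin n × Fin n, Rmat a x.swap x = ((gsum a : ℝ) : ℂ) := by
  have h1 : ∀ x : Fin n × Fin n, Rmat a x.swap x
      = ((Real.sqrt (a x.2 x.1 * a x.1 x.2) : ℝ) : ℂ) := by
    intro x
    rcases eq_or_ne x x.swap with hx | hx
    · have h2 : x.1 = x.2 := (Prod.ext_iff.mp hx).1
      rw [Rmat_apply, if_pos hx, Prod.fst_swap, Prod.snd_swap]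
      norm_cast
      rw [← h2, Real.sqrt_mul_self (ha x.1 x.1)]
    · rw [Rmat_apply, if_neg hx, if_pos (Prod.swap_swap x).symm, Prod.fst_swap, Prod.snd_swap]
  rw [Finset.sum_congr rfl fun x _ => h1 x]
  norm_cast
  rw [gsum, Fintype.sum_prod_type]
  exact Finset.sum_comm

lemma Rmat_cost {a : Fin n → Fin n → ℝ} {s t : Fin n → ℝ}
    (h : IsCoupling a s t) (hs1 : ∑ j, s j = 1) :
    ((CQ n * Rmat a).trace).re = (1/2) * (1 - gsum a) := by
  rw [cost_formula, Rmat_trace h hs1, Rmat_swap_sum h.nonneg]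
  simp

lemma Rmat_isHermitian (a : Fin n → Fin n → ℝ) : (Rmat a).IsHermitian := by
  ext x y
  rw [conjTranspose_apply, Rmat_apply, Rmat_apply]
  rcases eq_or_ne y x with rfl | hyx
  · rw [if_pos rfl]
    exact Complex.conj_ofReal _
  · rcases eq_or_ne y x.swap with hsw | hsw
    · have hxy : x = y.swap := by rw [hsw, Prod.swap_swap]
      rw [if_neg (fun hc => hyx hc.symm), if_neg hyx, if_pos hxy, if_pos hsw]
      rw [mul_comm (a y.1 y.2)]
      exact Complex.conj_ofReal _
    · have hxy : x ≠ y.swap := fun hc => hsw (by rw [hc, Prod.swap_swap])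
      rw [if_neg (fun hc => hyx hc.symm), if_neg hyx, if_neg hxy, if_neg hsw]
      exact star_zero _

lemma Rmat_posSemidef {a : Fin n → Fin n → ℝ} (ha : ∀ j p, 0 ≤ a j p) :
    (Rmat a).PosSemidef := by
  refine Matrix.posSemidef_iff_dotProduct_mulVec.mpr ⟨Rmat_isHermitian a, ?_⟩
  intro v
  set f : Fin n × Fin n → ℂ := fun x => ((Real.sqrt (a x.1 x.2) : ℝ) : ℂ) with hf_def
  have hstarf : ∀ x, star (f x) = f x := by
    intro x; rw [hf_def]; exact Complex.conj_ofReal _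
  have hface : ∀ x : Fin n × Fin n, ((a x.1 x.2 : ℝ) : ℂ) = f x * f x := by
    intro x; simp only [hf_def]; norm_cast; exact (Real.mul_self_sqrt (ha _ _)).symm
  have hcross : ∀ x : Fin n × Fin n,
      ((Real.sqrt (a x.1 x.2 * a x.swap.1 x.swap.2) : ℝ) : ℂ) = f x * f x.swap := by
    intro x; simp only [hf_def]; norm_cast
    exact Real.sqrt_mul (ha _ _) _
  set A : Finset (Fin n × Fin n) := univ.filter (fun x => ¬ x.swap = x) with hA_def
  set D : Finset (Fin n × Fin n) := univ.filter (fun x => x.swap = x) with hD_def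
  set w : Fin n × Fin n → ℂ := fun x => f x * v x + f x.swap * v x.swap with hw_def
  -- the inner product
  have hinner : ∀ x, (Rmat a *ᵥ v) x
      = ((a x.1 x.2 : ℝ) : ℂ) * v x
        + (if x.swap = x then 0 else (f x * f x.swap) * v x.swap) := by
    intro x
    show ∑ y, Rmat a x y * v y = _
    have hpt : ∀ y, Rmat a x y * v y
        = if y = x then ((a x.1 x.2 : ℝ) : ℂ) * v y
          else if y = x.swap then (f x * f x.swap) * v y else 0 := by
      intro y
      rw [Rmat_apply]
      split_ifs with h1 h2
      · rfl
      · rw [h2, hcross x]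
      · rw [zero_mul]
    rw [Finset.sum_congr rfl fun y _ => hpt y]
    rw [← Finset.add_sum_erase _ _ (mem_univ x), if_pos rfl]
    congr 1
    have h2 : ∀ y ∈ univ.erase x,
        (if y = x then ((a x.1 x.2 : ℝ) : ℂ) * v y
          else if y = x.swap then (f x * f x.swap) * v y else 0)
        = (if y = x.swap then (f x * f x.swap) * v y else 0) := by
      intro y hy
      rw [if_neg (Finset.ne_of_mem_erase hy)]
    rw [Finset.sum_congr rfl h2,
      Finset.sum_ite_eq' (univ.erase x) x.swap (fun y => (f x * f x.swap) * v y)]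
    rcases eq_or_ne x.swap x with h | h
    · rw [if_neg (by simp [Finset.mem_erase, h]), if_pos h]
    · rw [if_pos (by simp [Finset.mem_erase, h]), if_neg h]
  -- the quadratic form
  have hqf : star v ⬝ᵥ (Rmat a *ᵥ v)
      = ∑ x, ((a x.1 x.2 : ℝ) : ℂ) * (star (v x) * v x)
        + ∑ x ∈ A, (f x * f x.swap) * (star (v x) * v x.swap) := by
    rw [dotProduct]
    have hpt : ∀ x, star v x * (Rmat a *ᵥ v) x
        = ((a x.1 x.2 : ℝ) : ℂ) * (star (v x) * v x)
          + (if ¬ x.swap = x then (f x * f x.swap) * (star (v x) * v x.swap) else 0) := by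
      intro x
      rw [Pi.star_apply, hinner x, mul_add]
      congr 1
      · ring
      · rw [mul_ite, mul_zero, ite_not]
        split_ifs with h
        · rfl
        · ring
    rw [Finset.sum_congr rfl fun x _ => hpt x, Finset.sum_add_distrib]
    congr 1
    rw [hA_def, Finset.sum_filter]
  -- reindexing sums over A by the swap involution
  have hswapA : ∀ g : Fin n × Fin n → ℂ, ∑ x ∈ A, g x = ∑ x ∈ A, g x.swap := by
    intro g
    refine Finset.sum_equiv (Equiv.prodComm (Fin n) (Fin n)) ?_ ?_
    · intro x
      simp only [hA_def, Finset.mem_filter, mem_univ, true_and, Equiv.prodComm_apply]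
      rw [Prod.swap_swap]
      exact ne_comm
    · intro x _
      rfl
  -- the main identity
  have hexpand : ∀ x, star (w x) * w x
      = f x * f x * (star (v x) * v x) + f x.swap * f x.swap * (star (v x.swap) * v x.swap)
        + (f x * f x.swap * (star (v x) * v x.swap)
          + f x * f x.swap * (star (v x.swap) * v x)) := by
    intro x
    have hsw : star (w x) = f x * star (v x) + f x.swap * star (v x.swap) := by
      simp only [hw_def, star_add, star_mul', hstarf]
      try ring
    rw [hsw, hw_def]
    ring
  have hmain : ∑ x ∈ A, ((a x.1 x.2 : ℝ) : ℂ) * (star (v x) * v x)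
        + ∑ x ∈ A, (f x * f x.swap) * (star (v x) * v x.swap)
      = (2⁻¹ : ℂ) * ∑ x ∈ A, star (w x) * w x := by
    have hR : ∑ x ∈ A, star (w x) * w x
        = ∑ x ∈ A, f x * f x * (star (v x) * v x)
          + ∑ x ∈ A, f x.swap * f x.swap * (star (v x.swap) * v x.swap)
          + (∑ x ∈ A, f x * f x.swap * (star (v x) * v x.swap)
            + ∑ x ∈ A, f x * f x.swap * (star (v x.swap) * v x)) := by
      rw [Finset.sum_congr rfl fun x _ => hexpand x]
      simp only [Finset.sum_add_distrib]
    have e1 : ∑ x ∈ A, f x.swap * f x.swap * (star (v x.swap) * v x.swap)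
        = ∑ x ∈ A, f x * f x * (star (v x) * v x) := by
      rw [hswapA (fun x => f x.swap * f x.swap * (star (v x.swap) * v x.swap))]
      refine Finset.sum_congr rfl fun x _ => ?_
      rw [Prod.swap_swap]
    have e2 : ∑ x ∈ A, f x * f x.swap * (star (v x.swap) * v x)
        = ∑ x ∈ A, f x * f x.swap * (star (v x) * v x.swap) := by
      rw [hswapA (fun x => f x * f x.swap * (star (v x.swap) * v x))]
      refine Finset.sum_congr rfl fun x _ => ?_
      rw [Prod.swap_swap]
      ring
    have e3 : ∑ x ∈ A, ((a x.1 x.2 : ℝ) : ℂ) * (star (v x) * v x)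
        = ∑ x ∈ A, f x * f x * (star (v x) * v x) :=
      Finset.sum_congr rfl fun x _ => by rw [hface x]
    rw [hR, e1, e2, e3]
    ring
  -- put everything together
  have hsplit : ∑ x, ((a x.1 x.2 : ℝ) : ℂ) * (star (v x) * v x)
      = ∑ x ∈ D, ((a x.1 x.2 : ℝ) : ℂ) * (star (v x) * v x)
        + ∑ x ∈ A, ((a x.1 x.2 : ℝ) : ℂ) * (star (v x) * v x) := by
    rw [hD_def, hA_def]
    exact (Finset.sum_filter_add_sum_filter_not univ _ _).symm
  rw [hqf, hsplit, add_assoc, hmain]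
  apply add_nonneg
  · refine Finset.sum_nonneg fun x _ => mul_nonneg ?_ (star_mul_self_nonneg _)
    exact Complex.zero_le_real.mpr (ha _ _)
  · apply mul_nonneg
    · rw [show (2⁻¹ : ℂ) = ((2⁻¹ : ℝ) : ℂ) by norm_num]
      exact Complex.zero_le_real.mpr (by norm_num)
    · exact Finset.sum_nonneg fun x _ => star_mul_self_nonneg _

lemma sum_rot {α β γ M : Type*} [Fintype α] [Fintype β] [Fintype γ] [AddCommMonoid M]
    (T : α → β → γ → M) :
    ∑ k, ∑ c, ∑ l, T k c l = ∑ l, ∑ k, ∑ c, T k c l := by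
  calc ∑ k, ∑ c, ∑ l, T k c l = ∑ k, ∑ l, ∑ c, T k c l :=
        Finset.sum_congr rfl fun k _ => Finset.sum_comm
    _ = ∑ l, ∑ k, ∑ c, T k c l := Finset.sum_comm

lemma sum_rot2 {α β γ M : Type*} [Fintype α] [Fintype β] [Fintype γ] [AddCommMonoid M]
    (T : α → β → γ → M) :
    ∑ k, ∑ c, ∑ b, T k c b = ∑ b, ∑ c, ∑ k, T k c b := by
  calc ∑ k, ∑ c, ∑ b, T k c b = ∑ c, ∑ k, ∑ b, T k c b := Finset.sum_comm
    _ = ∑ c, ∑ b, ∑ k, T k c b := Finset.sum_congr rfl fun c _ => Finset.sum_comm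
    _ = ∑ b, ∑ c, ∑ k, T k c b := Finset.sum_comm

lemma kron_apply {m : ℕ} (A : Matrix (Fin m) (Fin m) ℂ) (B : Matrix (Fin n) (Fin n) ℂ)
    (x y : Fin m × Fin n) : kron A B x y = A x.1 y.1 * B x.2 y.2 := rfl

lemma kron_mul {m : ℕ} (A C : Matrix (Fin m) (Fin m) ℂ) (B D : Matrix (Fin n) (Fin n) ℂ) :
    kron A B * kron C D = kron (A * C) (B * D) := by
  ext x y
  rw [Matrix.mul_apply, kron_apply, Matrix.mul_apply, Matrix.mul_apply]
  rw [Fintype.sum_prod_type]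
  rw [Finset.sum_mul_sum]
  refine Finset.sum_congr rfl fun k _ => Finset.sum_congr rfl fun l _ => ?_
  rw [kron_apply, kron_apply]
  ring

lemma kron_conjTranspose {m : ℕ} (A : Matrix (Fin m) (Fin m) ℂ)
    (B : Matrix (Fin n) (Fin n) ℂ) : (kron A B)ᴴ = kron Aᴴ Bᴴ := by
  ext x y
  rw [conjTranspose_apply, kron_apply, kron_apply, conjTranspose_apply, conjTranspose_apply]
  rw [star_mul']

lemma kron_one {m : ℕ} : kron (1 : Matrix (Fin m) (Fin m) ℂ) (1 : Matrix (Fin n) (Fin n) ℂ)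
    = 1 := by
  ext x y
  rw [kron_apply, Matrix.one_apply, Matrix.one_apply, Matrix.one_apply]
  by_cases h1 : x.1 = y.1
  · by_cases h2 : x.2 = y.2
    · rw [if_pos h1, if_pos h2, if_pos (Prod.ext h1 h2), one_mul]
    · rw [if_pos h1, if_neg h2, if_neg (fun hc => h2 (congrArg Prod.snd hc)), mul_zero]
  · rw [if_neg h1, if_neg (fun hc => h1 (congrArg Prod.fst hc)), zero_mul]

lemma swapM_mul_kron (U : Matrix (Fin n) (Fin n) ℂ) :
    swapM n * kron U U = kron U U * swapM n := by
  ext x y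
  rw [Matrix.mul_apply, Matrix.mul_apply]
  have h1 : ∀ z, swapM n x z * kron U U z y = if z = x.swap then kron U U z y else 0 := by
    intro z
    rw [swapM_apply]
    split_ifs
    · rw [one_mul]
    · rw [zero_mul]
  have h2 : ∀ z, kron U U x z * swapM n z y = if z = y.swap then kron U U x z else 0 := by
    intro z
    rw [swapM_apply z y]
    rcases eq_or_ne z y.swap with hz | hz
    · rw [if_pos (by rw [hz, Prod.swap_swap]), if_pos hz, mul_one]
    · rw [if_neg (fun hc => hz (by rw [hc, Prod.swap_swap])), if_neg hz, mul_zero]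
  rw [Finset.sum_congr rfl fun z _ => h1 z, Finset.sum_congr rfl fun z _ => h2 z,
    Finset.sum_ite_eq' univ x.swap (fun z => kron U U z y),
    Finset.sum_ite_eq' univ y.swap (fun z => kron U U x z)]
  simp only [mem_univ, if_true]
  rw [kron_apply, kron_apply]
  simp only [Prod.fst_swap, Prod.snd_swap]
  ring

lemma CQ_mul_kron (U : Matrix (Fin n) (Fin n) ℂ) :
    kron U U * CQ n = CQ n * kron U U := by
  rw [CQ, Matrix.mul_smul, Matrix.smul_mul]
  congr 1
  rw [Matrix.mul_sub, Matrix.sub_mul, Matrix.mul_one, Matrix.one_mul, swapM_mul_kron]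

lemma kron_unitary {U : Matrix (Fin n) (Fin n) ℂ} (hU : Uᴴ * U = 1) :
    (kron U U)ᴴ * kron U U = 1 := by
  rw [kron_conjTranspose, kron_mul, hU, kron_one]

/-- intertwining of the partial trace over B with local unitaries -/

lemma trB_conj {U : Matrix (Fin n) (Fin n) ℂ} (hU : Uᴴ * U = 1)
    (R : Matrix (Fin n × Fin n) (Fin n × Fin n) ℂ) :
    trB ((kron U U)ᴴ * R * kron U U) = Uᴴ * trB R * U := by
  have hUU : U * Uᴴ = 1 := mul_eq_one_comm.mp hU
  ext i j
  show (∑ p, ((kron U U)ᴴ * R * kron U U) (i, p) (j, p)) = (Uᴴ * trB R * U) i j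
  have hentry : ∀ x y : Fin n × Fin n, ((kron U U)ᴴ * R * kron U U) x y
      = ∑ z, ∑ w, (star (U z.1 x.1) * star (U z.2 x.2)) * R z w * (U w.1 y.1 * U w.2 y.2) := by
    intro x y
    rw [Matrix.mul_apply]
    have h1 : ∀ w, ((kron U U)ᴴ * R) x w * kron U U w y
        = ∑ z, star (U z.1 x.1) * star (U z.2 x.2) * R z w * (U w.1 y.1 * U w.2 y.2) := by
      intro w
      rw [Matrix.mul_apply, Finset.sum_mul]
      refine Finset.sum_congr rfl fun z _ => ?_
      rw [conjTranspose_apply, kron_apply, kron_apply, star_mul']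
      try ring
    rw [Finset.sum_congr rfl fun w (_ : w ∈ univ) => h1 w, Finset.sum_comm]
  rw [Finset.sum_congr rfl fun p (_ : p ∈ univ) => hentry (i, p) (j, p)]
  -- swap the p-sum inside
  rw [Finset.sum_comm]
  have houter : ∀ z : Fin n × Fin n,
      (∑ p, ∑ w, (star (U z.1 i) * star (U z.2 p)) * R z w * (U w.1 j * U w.2 p))
      = ∑ w : Fin n × Fin n, star (U z.1 i) * R z w * U w.1 j
          * (if w.2 = z.2 then 1 else 0) := by
    intro z
    rw [Finset.sum_comm]
    refine Finset.sum_congr rfl fun w _ => ?_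
    have hcollect : ∑ p, (star (U z.1 i) * star (U z.2 p)) * R z w * (U w.1 j * U w.2 p)
        = star (U z.1 i) * R z w * U w.1 j * ∑ p, U w.2 p * star (U z.2 p) := by
      rw [Finset.mul_sum]
      refine Finset.sum_congr rfl fun p _ => ?_
      ring
    rw [hcollect]
    congr 1
    have : ∑ p, U w.2 p * star (U z.2 p) = (U * Uᴴ) w.2 z.2 := by
      rw [Matrix.mul_apply]
      refine Finset.sum_congr rfl fun p _ => ?_
      rw [conjTranspose_apply]
    rw [this, hUU, Matrix.one_apply]
  rw [Finset.sum_congr rfl fun z (_ : z ∈ univ) => houter z]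
  -- now collapse the δ and reorganize
  rw [Fintype.sum_prod_type]
  have hcol : ∀ k c, (∑ w : Fin n × Fin n, star (U k i) * R (k, c) w * U w.1 j
      * (if w.2 = c then 1 else 0)) = ∑ l, star (U k i) * R (k, c) (l, c) * U l j := by
    intro k c
    rw [Fintype.sum_prod_type]
    refine Finset.sum_congr rfl fun l _ => ?_
    have : ∀ b, star (U k i) * R (k, c) (l, b) * U l j * (if b = c then 1 else 0)
        = if b = c then star (U k i) * R (k, c) (l, b) * U l j else 0 := by
      intro b
      split_ifs
      · rw [mul_one]
      · rw [mul_zero]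
    rw [Finset.sum_congr rfl fun b _ => this b,
      Finset.sum_ite_eq' univ c (fun b => star (U k i) * R (k, c) (l, b) * U l j)]
    simp
  rw [Finset.sum_congr rfl fun k (_ : k ∈ univ) =>
    Finset.sum_congr rfl fun c (_ : c ∈ univ) => hcol k c]
  -- RHS
  rw [Matrix.mul_apply]
  have hrhs : ∀ l, (Uᴴ * trB R) i l * U l j
      = ∑ k, ∑ c, star (U k i) * R (k, c) (l, c) * U l j := by
    intro l
    rw [Matrix.mul_apply, Finset.sum_mul]
    refine Finset.sum_congr rfl fun k _ => ?_
    rw [conjTranspose_apply]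
    show star (U k i) * trB R k l * U l j = _
    have : trB R k l = ∑ c, R (k, c) (l, c) := rfl
    rw [this, Finset.mul_sum, Finset.sum_mul]
    try exact Finset.sum_congr rfl fun c _ => by ring
  rw [Finset.sum_congr rfl fun l (_ : l ∈ univ) => hrhs l]
  exact sum_rot (fun k c l => star (U k i) * R (k, c) (l, c) * U l j)

/-- intertwining of the partial trace over A with local unitaries -/

lemma trA_conj {U : Matrix (Fin n) (Fin n) ℂ} (hU : Uᴴ * U = 1)
    (R : Matrix (Fin n × Fin n) (Fin n × Fin n) ℂ) :
    trA ((kron U U)ᴴ * R * kron U U) = Uᴴ * trA R * U := by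
  have hUU : U * Uᴴ = 1 := mul_eq_one_comm.mp hU
  ext p q
  show (∑ i, ((kron U U)ᴴ * R * kron U U) (i, p) (i, q)) = (Uᴴ * trA R * U) p q
  have hentry : ∀ x y : Fin n × Fin n, ((kron U U)ᴴ * R * kron U U) x y
      = ∑ z, ∑ w, (star (U z.1 x.1) * star (U z.2 x.2)) * R z w * (U w.1 y.1 * U w.2 y.2) := by
    intro x y
    rw [Matrix.mul_apply]
    have h1 : ∀ w, ((kron U U)ᴴ * R) x w * kron U U w y
        = ∑ z, star (U z.1 x.1) * star (U z.2 x.2) * R z w * (U w.1 y.1 * U w.2 y.2) := by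
      intro w
      rw [Matrix.mul_apply, Finset.sum_mul]
      refine Finset.sum_congr rfl fun z _ => ?_
      rw [conjTranspose_apply, kron_apply, kron_apply, star_mul']
      try ring
    rw [Finset.sum_congr rfl fun w (_ : w ∈ univ) => h1 w, Finset.sum_comm]
  rw [Finset.sum_congr rfl fun i (_ : i ∈ univ) => hentry (i, p) (i, q)]
  rw [Finset.sum_comm]
  have houter : ∀ z : Fin n × Fin n,
      (∑ i, ∑ w, (star (U z.1 i) * star (U z.2 p)) * R z w * (U w.1 i * U w.2 q))
      = ∑ w : Fin n × Fin n, star (U z.2 p) * R z w * U w.2 q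
          * (if w.1 = z.1 then 1 else 0) := by
    intro z
    rw [Finset.sum_comm]
    refine Finset.sum_congr rfl fun w _ => ?_
    have hcollect : ∑ i, (star (U z.1 i) * star (U z.2 p)) * R z w * (U w.1 i * U w.2 q)
        = star (U z.2 p) * R z w * U w.2 q * ∑ i, U w.1 i * star (U z.1 i) := by
      rw [Finset.mul_sum]
      refine Finset.sum_congr rfl fun i _ => ?_
      ring
    rw [hcollect]
    congr 1
    have : ∑ i, U w.1 i * star (U z.1 i) = (U * Uᴴ) w.1 z.1 := by
      rw [Matrix.mul_apply]
      refine Finset.sum_congr rfl fun i _ => ?_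
      rw [conjTranspose_apply]
    rw [this, hUU, Matrix.one_apply]
  rw [Finset.sum_congr rfl fun z (_ : z ∈ univ) => houter z]
  rw [Fintype.sum_prod_type]
  have hcol : ∀ k c, (∑ w : Fin n × Fin n, star (U c p) * R (k, c) w * U w.2 q
      * (if w.1 = k then 1 else 0)) = ∑ b, star (U c p) * R (k, c) (k, b) * U b q := by
    intro k c
    rw [Fintype.sum_prod_type]
    have : ∀ l, (∑ b, star (U c p) * R (k, c) (l, b) * U b q * (if l = k then 1 else 0))
        = if l = k then (∑ b, star (U c p) * R (k, c) (l, b) * U b q) else 0 := by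
      intro l
      split_ifs
      · refine Finset.sum_congr rfl fun b _ => by rw [mul_one]
      · rw [Finset.sum_congr rfl fun b (_ : b ∈ univ) => mul_zero _, Finset.sum_const_zero]
    rw [Finset.sum_congr rfl fun l (_ : l ∈ univ) => this l,
      Finset.sum_ite_eq' univ k (fun l => ∑ b, star (U c p) * R (k, c) (l, b) * U b q)]
    simp
  rw [Finset.sum_congr rfl fun k (_ : k ∈ univ) =>
    Finset.sum_congr rfl fun c (_ : c ∈ univ) => hcol k c]
  rw [Matrix.mul_apply]
  have hrhs : ∀ b, (Uᴴ * trA R) p b * U b q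
      = ∑ c, ∑ k, star (U c p) * R (k, c) (k, b) * U b q := by
    intro b
    rw [Matrix.mul_apply, Finset.sum_mul]
    refine Finset.sum_congr rfl fun c _ => ?_
    rw [conjTranspose_apply]
    show star (U c p) * trA R c b * U b q = _
    have : trA R c b = ∑ k, R (k, c) (k, b) := rfl
    rw [this, Finset.mul_sum, Finset.sum_mul]
    try exact Finset.sum_congr rfl fun k _ => by ring
  rw [Finset.sum_congr rfl fun b (_ : b ∈ univ) => hrhs b]
  exact sum_rot2 (fun k c b => star (U c p) * R (k, c) (k, b) * U b q)

lemma cost_conj {U : Matrix (Fin n) (Fin n) ℂ} (hU : Uᴴ * U = 1)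
    (R : Matrix (Fin n × Fin n) (Fin n × Fin n) ℂ) :
    ((CQ n * ((kron U U)ᴴ * R * kron U U)).trace) = ((CQ n * R).trace) := by
  have hV := kron_unitary hU
  have hVV : kron U U * (kron U U)ᴴ = 1 := mul_eq_one_comm.mp hV
  have h1 : CQ n * ((kron U U)ᴴ * R * kron U U)
      = CQ n * (kron U U)ᴴ * R * kron U U := by
    simp only [Matrix.mul_assoc]
  rw [h1, Matrix.trace_mul_cycle]
  have h2 : kron U U * (CQ n * (kron U U)ᴴ) * R = CQ n * R := by
    rw [← Matrix.mul_assoc, CQ_mul_kron, Matrix.mul_assoc (CQ n), hVV, Matrix.mul_one]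
  rw [h2]

/-- continuity of the transport cost -/

lemma cost_continuous : Continuous (fun R : Matrix (Fin n × Fin n) (Fin n × Fin n) ℂ =>
    ((CQ n * R).trace).re) := by
  have h : (fun R : Matrix (Fin n × Fin n) (Fin n × Fin n) ℂ => ((CQ n * R).trace).re)
      = fun R => ∑ x, (∑ y, CQ n x y * R y x).re := by
    funext R
    rw [Matrix.trace, Complex.re_sum]
    exact Finset.sum_congr rfl fun x _ => by rw [Matrix.diag, Matrix.mul_apply]
  rw [h]
  refine continuous_finset_sum _ fun x _ => ?_
  refine Complex.continuous_re.comp ?_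
  refine continuous_finset_sum _ fun y _ => ?_
  exact continuous_const.mul ((continuous_apply x).comp (continuous_apply y))

lemma continuous_qf (v : Fin n × Fin n → ℂ) :
    Continuous (fun R : Matrix (Fin n × Fin n) (Fin n × Fin n) ℂ => star v ⬝ᵥ (R *ᵥ v)) := by
  have h : (fun R : Matrix (Fin n × Fin n) (Fin n × Fin n) ℂ => star v ⬝ᵥ (R *ᵥ v))
      = fun R => ∑ x, star (v x) * ∑ y, R x y * v y := rfl
  rw [h]
  refine continuous_finset_sum _ fun x _ => ?_
  refine Continuous.mul continuous_const ?_
  refine continuous_finset_sum _ fun y _ => ?_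
  exact (continuous_id.matrix_elem x y).mul continuous_const

lemma isClosed_nonnegC : IsClosed {z : ℂ | 0 ≤ z} := by
  have h : {z : ℂ | 0 ≤ z} = Complex.re ⁻¹' (Set.Ici 0) ∩ Complex.im ⁻¹' {0} := by
    ext z
    simp only [Set.mem_setOf_eq, Set.mem_inter_iff, Set.mem_preimage, Set.mem_Ici,
      Set.mem_singleton_iff, Complex.le_def, Complex.zero_re, Complex.zero_im]
    constructor
    · rintro ⟨h1, h2⟩; exact ⟨h1, h2.symm⟩
    · rintro ⟨h1, h2⟩; exact ⟨h1, h2.symm⟩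
  rw [h]
  exact (isClosed_Ici.preimage Complex.continuous_re).inter
    (isClosed_singleton.preimage Complex.continuous_im)

lemma isClosed_QC (A B : Matrix (Fin n) (Fin n) ℂ) :
    IsClosed (QCouplings A B) := by
  have h : QCouplings A B
      = ({R : Matrix (Fin n × Fin n) (Fin n × Fin n) ℂ | Rᴴ = R}
        ∩ ⋂ v : Fin n × Fin n → ℂ, {R | 0 ≤ star v ⬝ᵥ (R *ᵥ v)})
        ∩ ({R | R.trace = 1} ∩ ({R | trB R = A} ∩ {R | trA R = B})) := by
    ext R
    simp only [QCouplings, IsDensityMatrix, Matrix.posSemidef_iff_dotProduct_mulVec, Matrix.IsHermitian,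
      Set.mem_setOf_eq, Set.mem_inter_iff, Set.mem_iInter]
    tauto
  rw [h]
  refine IsClosed.inter (IsClosed.inter ?_ ?_) (IsClosed.inter ?_ (IsClosed.inter ?_ ?_))
  · exact isClosed_eq (continuous_id.matrix_conjTranspose) continuous_id
  · refine isClosed_iInter fun v => ?_
    exact isClosed_nonnegC.preimage (continuous_qf v)
  · exact isClosed_eq (continuous_id.matrix_trace) continuous_const
  · refine isClosed_eq ?_ continuous_const
    refine continuous_matrix fun i j => ?_
    show Continuous fun R : Matrix (Fin n × Fin n) (Fin n × Fin n) ℂ => ∑ p, R (i, p) (j, p)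
    refine continuous_finset_sum _ fun p _ => ?_
    exact (continuous_apply (j, p)).comp (continuous_apply (i, p))
  · refine isClosed_eq ?_ continuous_const
    refine continuous_matrix fun p q => ?_
    show Continuous fun R : Matrix (Fin n × Fin n) (Fin n × Fin n) ℂ => ∑ i, R (i, p) (i, q)
    refine continuous_finset_sum _ fun i _ => ?_
    exact (continuous_apply (i, q)).comp (continuous_apply (i, p))

lemma trace_re_one {R : Matrix (Fin n × Fin n) (Fin n × Fin n) ℂ}
    (h : R.trace = 1) : ∑ x, (R x x).re = 1 := by
  have h2 := congrArg Complex.re h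
  rw [Matrix.trace, Complex.re_sum, Complex.one_re] at h2
  rw [← h2]
  rfl

lemma diag_le_one {R : Matrix (Fin n × Fin n) (Fin n × Fin n) ℂ}
    (hpsd : R.PosSemidef) (htr : R.trace = 1) (x : Fin n × Fin n) : (R x x).re ≤ 1 := by
  rw [← trace_re_one htr]
  exact Finset.single_le_sum (f := fun y => (R y y).re)
    (fun y _ => (psd_diag hpsd y).1) (mem_univ x)

lemma isCompact_QC (A B : Matrix (Fin n) (Fin n) ℂ) :
    IsCompact (QCouplings A B) := by
  have h1 : IsCompact (Set.pi Set.univ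
      (fun _ : Fin n × Fin n => Set.pi Set.univ
        (fun _ : Fin n × Fin n => Metric.closedBall (0:ℂ) 1))) :=
    isCompact_univ_pi fun _ => isCompact_univ_pi fun _ =>
      isCompact_closedBall _ _
  refine h1.of_isClosed_subset (isClosed_QC A B) ?_
  intro R hR
  rw [Set.mem_univ_pi]
  intro x
  rw [Set.mem_univ_pi]
  intro y
  rw [Metric.mem_closedBall, dist_zero_right]
  have hxx := diag_le_one hR.1.1 hR.1.2 x
  have hyy := diag_le_one hR.1.1 hR.1.2 y
  have hxx0 := (psd_diag hR.1.1 x).1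
  have hyy0 := (psd_diag hR.1.1 y).1
  have h2 : ‖R x y‖ ^ 2 ≤ (R x x).re * (R y y).re :=
    psd_entry_sq_le hR.1.1 x y
  nlinarith [norm_nonneg (R x y)]

lemma exists_min (A B : Matrix (Fin n) (Fin n) ℂ) (hne : (QCouplings A B).Nonempty) :
    ∃ R ∈ QCouplings A B, ((CQ n * R).trace).re = QOT (CQ n) A B := by
  have himg : IsCompact ((fun R => ((CQ n * R).trace).re) '' QCouplings A B) :=
    (isCompact_QC A B).image cost_continuous
  have hmem := himg.sInf_mem (hne.image _)
  obtain ⟨R, hR, hcost⟩ := hmem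
  exact ⟨R, hR, hcost⟩

/-- the diagonal of a quantum coupling of diagonal states is a classical coupling -/

lemma coupling_of_member {s t : Fin n → ℝ}
    {R : Matrix (Fin n × Fin n) (Fin n × Fin n) ℂ}
    (hR : R ∈ QCouplings (Matrix.diagonal (fun i => (s i : ℂ)))
      (Matrix.diagonal (fun i => (t i : ℂ)))) :
    IsCoupling (fun j p => (R (j, p) (j, p)).re) s t := by
  refine ⟨fun j p => (psd_diag hR.1.1 (j, p)).1, ?_, ?_⟩
  · intro j
    have h1 := congrFun (congrFun hR.2.1 j) j
    rw [Matrix.diagonal_apply_eq] at h1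
    have h2 : trB R j j = ∑ p, R (j, p) (j, p) := rfl
    rw [h2] at h1
    have h3 := congrArg Complex.re h1
    rw [Complex.re_sum, Complex.ofReal_re] at h3
    exact h3
  · intro p
    have h1 := congrFun (congrFun hR.2.2 p) p
    rw [Matrix.diagonal_apply_eq] at h1
    have h2 : trA R p p = ∑ j, R (j, p) (j, p) := rfl
    rw [h2] at h1
    have h3 := congrArg Complex.re h1
    rw [Complex.re_sum, Complex.ofReal_re] at h3
    exact h3

lemma retrS_le_gsum {R : Matrix (Fin n × Fin n) (Fin n × Fin n) ℂ}
    (hpsd : R.PosSemidef) :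
    (∑ x : Fin n × Fin n, R x.swap x).re
      ≤ gsum (fun j p => (R (j, p) (j, p)).re) := by
  rw [Complex.re_sum]
  have h1 : ∀ x : Fin n × Fin n, (R x.swap x).re
      ≤ Real.sqrt ((R (x.2, x.1) (x.2, x.1)).re * (R (x.1, x.2) (x.1, x.2)).re) := by
    intro x
    exact psd_re_entry_le hpsd x.swap x
  calc ∑ x : Fin n × Fin n, (R x.swap x).re
      ≤ ∑ x : Fin n × Fin n,
          Real.sqrt ((R (x.2, x.1) (x.2, x.1)).re * (R (x.1, x.2) (x.1, x.2)).re) :=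
        Finset.sum_le_sum fun x _ => h1 x
    _ = gsum (fun j p => (R (j, p) (j, p)).re) := by
        rw [gsum, Fintype.sum_prod_type]
        exact Finset.sum_comm

lemma prod_coupling {s t : Fin n → ℝ} (hs0 : ∀ j, 0 ≤ s j) (ht0 : ∀ j, 0 ≤ t j)
    (hs1 : ∑ j, s j = 1) (ht1 : ∑ j, t j = 1) :
    IsCoupling (fun j p => s j * t p) s t := by
  refine ⟨fun j p => mul_nonneg (hs0 j) (ht0 p), ?_, ?_⟩
  · intro j; rw [← Finset.mul_sum, ht1, mul_one]
  · intro p; rw [← Finset.sum_mul, hs1, one_mul]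

lemma image_subset_conj {U : Matrix (Fin n) (Fin n) ℂ} (hU : Uᴴ * U = 1)
    (A B : Matrix (Fin n) (Fin n) ℂ) :
    ((fun R => ((CQ n * R).trace).re) '' QCouplings A B)
      ⊆ ((fun R => ((CQ n * R).trace).re) ''
          QCouplings (Uᴴ * A * U) (Uᴴ * B * U)) := by
  rintro r ⟨R, hR, rfl⟩
  have hV := kron_unitary hU
  have hVV : kron U U * (kron U U)ᴴ = 1 := mul_eq_one_comm.mp hV
  refine ⟨(kron U U)ᴴ * R * kron U U, ⟨⟨?_, ?_⟩, ?_, ?_⟩, ?_⟩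
  · exact hR.1.1.conjTranspose_mul_mul_same (kron U U)
  · rw [Matrix.trace_mul_cycle, hVV, Matrix.one_mul]
    exact hR.1.2
  · rw [trB_conj hU R, hR.2.1]
  · rw [trA_conj hU R, hR.2.2]
  · show ((CQ n * ((kron U U)ᴴ * R * kron U U)).trace).re = _
    rw [cost_conj hU R]

lemma QOT_conj {U : Matrix (Fin n) (Fin n) ℂ} (hU : Uᴴ * U = 1)
    (A B : Matrix (Fin n) (Fin n) ℂ) :
    QOT (CQ n) (Uᴴ * A * U) (Uᴴ * B * U) = QOT (CQ n) A B := by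
  have hUU : U * Uᴴ = 1 := mul_eq_one_comm.mp hU
  unfold QOT
  congr 1
  apply Set.Subset.antisymm
  · have hU' : (Uᴴ)ᴴ * Uᴴ = 1 := by
      rw [conjTranspose_conjTranspose]
      exact hUU
    have h := image_subset_conj hU' (Uᴴ * A * U) (Uᴴ * B * U)
    have hA : (Uᴴ)ᴴ * (Uᴴ * A * U) * Uᴴ = A := by
      rw [conjTranspose_conjTranspose]
      calc U * (Uᴴ * A * U) * Uᴴ = U * Uᴴ * (A * (U * Uᴴ)) := by
            simp only [Matrix.mul_assoc]
        _ = A := by rw [hUU, Matrix.one_mul, Matrix.mul_one]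
    have hB : (Uᴴ)ᴴ * (Uᴴ * B * U) * Uᴴ = B := by
      rw [conjTranspose_conjTranspose]
      calc U * (Uᴴ * B * U) * Uᴴ = U * Uᴴ * (B * (U * Uᴴ)) := by
            simp only [Matrix.mul_assoc]
        _ = B := by rw [hUU, Matrix.one_mul, Matrix.mul_one]
    rw [hA, hB] at h
    exact h
  · exact image_subset_conj hU A B

/-- Equality analysis: equality at an index `i` with `t i ≤ s i` forces the

structure condition at `i`. -/

lemma gsum_eq_extract {a : Fin n → Fin n → ℝ} {s t : Fin n → ℝ}
    (h : IsCoupling a s t) (hsum : ∑ j, s j = 1) (i : Fin n) (hts : t i ≤ s i)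
    (heq : gsum a = 1 - (Real.sqrt (s i) - Real.sqrt (t i)) ^ 2) :
    ∀ j, j ≠ i → s j ≤ t j ∧ t i * t j ≤ s i * s j := by
  have ha := h.nonneg
  obtain ⟨hrow, hcol, hblock⟩ := coupling_erase a h hsum i
  have hsi : 0 ≤ s i := by
    rw [← h.row i]; exact Finset.sum_nonneg fun p _ => ha i p
  have hti : 0 ≤ t i := by
    rw [← h.col i]; exact Finset.sum_nonneg fun j _ => ha j i
  have hA := Real.sq_sqrt hsi
  have hB := Real.sq_sqrt hti
  have hAB : Real.sqrt (s i) * Real.sqrt (t i) = Real.sqrt (s i * t i) :=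
    (Real.sqrt_mul hsi _).symm
  set q := Real.sqrt (s i * t i) with hq_def
  have hgoal : (1:ℝ) - (Real.sqrt (s i) - Real.sqrt (t i)) ^ 2
      = 1 - s i - t i + 2 * q := by
    rw [← hAB]; linear_combination - hA - hB
  set C := ∑ p ∈ univ.erase i, Real.sqrt (a i p * a p i) with hC_def
  set T2 := ∑ j ∈ univ.erase i, ∑ p ∈ univ.erase i, Real.sqrt (a j p * a p j) with hT2_def
  have hid : a i i + 2 * C + T2 = 1 - s i - t i + 2 * q := by
    rw [← hgoal, ← heq]; exact (gsum_decomp a i ha).symm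
  have hkey := key_bound h hsum i
  rw [← hC_def] at hkey
  have hT2le : T2 ≤ 1 - s i - t i + a i i := by
    rw [hT2_def, ← hblock]; exact block_le a i ha
  -- both slacks vanish
  have hT2eq : T2 = 1 - s i - t i + a i i := by linarith
  have hCeq : a i i + 2 * C = 2 * q - a i i := by linarith
  -- symmetry of the block
  have hsym : ∀ j ∈ univ.erase i, ∀ p ∈ univ.erase i, a j p = a p j := by
    have hprod_le : ∀ x ∈ (univ.erase i) ×ˢ (univ.erase i),
        Real.sqrt (a x.1 x.2 * a x.2 x.1) ≤ (a x.1 x.2 + a x.2 x.1) / 2 :=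
      fun x _ => sqrt_am_gm (ha x.1 x.2) (ha x.2 x.1)
    have hhalf : ∑ x ∈ (univ.erase i) ×ˢ (univ.erase i), (a x.1 x.2 + a x.2 x.1) / 2
        = 1 - s i - t i + a i i := by
      have h1 : ∑ x ∈ (univ.erase i) ×ˢ (univ.erase i), (a x.1 x.2 + a x.2 x.1) / 2
          = (∑ x ∈ (univ.erase i) ×ˢ (univ.erase i), a x.1 x.2
            + ∑ x ∈ (univ.erase i) ×ˢ (univ.erase i), a x.2 x.1) / 2 := by
        rw [← Finset.sum_add_distrib, Finset.sum_div]
      have h2 : ∑ x ∈ (univ.erase i) ×ˢ (univ.erase i), a x.1 x.2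
          = 1 - s i - t i + a i i := by
        rw [Finset.sum_product]; exact hblock
      have h3 : ∑ x ∈ (univ.erase i) ×ˢ (univ.erase i), a x.2 x.1
          = 1 - s i - t i + a i i := by
        rw [Finset.sum_product]
        rw [Finset.sum_comm]
        exact hblock
      rw [h1, h2, h3]; ring
    have hT2prod : ∑ x ∈ (univ.erase i) ×ˢ (univ.erase i),
        Real.sqrt (a x.1 x.2 * a x.2 x.1) = T2 := by
      rw [hT2_def, Finset.sum_product]
    have := sum_eq_termwise hprod_le (by rw [hT2prod, hT2eq, hhalf])
    intro j hj p hp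
    exact sqrt_am_gm_eq (ha j p) (ha p j) (this (j, p) (Finset.mem_product.mpr ⟨hj, hp⟩))
  -- cross equalities (only needed when t i > 0)
  have hcross_eq : 0 < t i → ∀ p ∈ univ.erase i, t i * a i p = s i * a p i := by
    intro htpos p hp
    have hspos : 0 < s i := lt_of_lt_of_le htpos hts
    have hstpos : 0 < s i * t i := mul_pos hspos htpos
    have hqpos : 0 < q := Real.sqrt_pos.mpr hstpos
    have hqsq : q ^ 2 = s i * t i := Real.sq_sqrt (le_of_lt hstpos)
    have hAMq : 2 * q ≤ s i + t i := by
      have := sqrt_am_gm hsi hti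
      rw [← hq_def] at this; linarith
    -- pointwise bound
    have hpt : ∀ r ∈ univ.erase i,
        q * (2 * Real.sqrt (a i r * a r i)) ≤ t i * a i r + s i * a r i := by
      intro r _
      have h1 : q * Real.sqrt (a i r * a r i)
          = Real.sqrt ((t i * a i r) * (s i * a r i)) := by
        rw [hq_def, ← Real.sqrt_mul (le_of_lt hstpos)]
        congr 1; ring
      have h2 := sqrt_am_gm (mul_nonneg hti (ha i r)) (mul_nonneg hsi (ha r i))
      rw [← h1] at h2; linarith
    -- sums agree
    have hsum_lhs : ∑ r ∈ univ.erase i, q * (2 * Real.sqrt (a i r * a r i))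
        = q * (2 * C) := by
      rw [hC_def, Finset.mul_sum, Finset.mul_sum]
    have hsum_rhs : ∑ r ∈ univ.erase i, (t i * a i r + s i * a r i)
        = 2 * (s i * t i) - (s i + t i) * a i i := by
      rw [Finset.sum_add_distrib, ← Finset.mul_sum, ← Finset.mul_sum, hrow, hcol]
      ring
    -- q * 2C ≥ RHS-value, from the equality `hCeq`
    have haii : 0 ≤ a i i := ha i i
    have hge : q * (2 * C) ≥ 2 * (s i * t i) - (s i + t i) * a i i := by
      have h2C : 2 * C = 2 * q - 2 * a i i := by linarith
      rw [h2C]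
      nlinarith [mul_nonneg haii (sub_nonneg.mpr hAMq)]
    have hle := Finset.sum_le_sum hpt
    rw [hsum_lhs, hsum_rhs] at hle
    have hsums_eq : ∑ r ∈ univ.erase i, q * (2 * Real.sqrt (a i r * a r i))
        = ∑ r ∈ univ.erase i, (t i * a i r + s i * a r i) := by
      rw [hsum_lhs, hsum_rhs]; linarith
    have hterm := sum_eq_termwise hpt hsums_eq p hp
    -- convert to AM-GM equality
    have h1 : q * Real.sqrt (a i p * a p i)
        = Real.sqrt ((t i * a i p) * (s i * a p i)) := by
      rw [hq_def, ← Real.sqrt_mul (le_of_lt hstpos)]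
      congr 1; ring
    have h2 : Real.sqrt ((t i * a i p) * (s i * a p i))
        = ((t i * a i p) + (s i * a p i)) / 2 := by
      rw [← h1]; linarith
    exact sqrt_am_gm_eq (mul_nonneg hti (ha i p)) (mul_nonneg hsi (ha p i)) h2
  -- now conclude
  intro j hj
  have hjmem : j ∈ univ.erase i := Finset.mem_erase.mpr ⟨hj, mem_univ j⟩
  have hm : 0 ≤ ∑ p ∈ univ.erase i, a j p :=
    Finset.sum_nonneg fun p _ => ha j p
  have hsj : s j = a j i + ∑ p ∈ univ.erase i, a j p := by
    rw [← h.row j, ← Finset.add_sum_erase _ _ (mem_univ i)]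
  have htj : t j = a i j + ∑ p ∈ univ.erase i, a j p := by
    rw [← h.col j, ← Finset.add_sum_erase _ _ (mem_univ i)]
    congr 1
    exact Finset.sum_congr rfl fun p hp => hsym p hp j hjmem
  rcases eq_or_lt_of_le hti with hti0 | htpos
  · -- t i = 0
    have hcoli0 : ∀ k, a k i = 0 := by
      intro k
      have h0 : ∑ k, a k i = 0 := by rw [h.col i, ← hti0]
      exact (Finset.sum_eq_zero_iff_of_nonneg (fun r _ => ha r i)).mp h0 k (mem_univ k)
    constructor
    · rw [hsj, htj, hcoli0 j]
      linarith [ha i j]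
    · rw [← hti0]
      have hsj0 : 0 ≤ s j := by rw [hsj, hcoli0 j]; linarith
      simp [mul_nonneg hsi hsj0]
  · have hcr := hcross_eq htpos j hjmem
    have hmeq : s i * s j - t i * t j
        = (s i - t i) * (∑ p ∈ univ.erase i, a j p) + (s i * a j i - t i * a i j) := by
      rw [hsj, htj]; ring
    constructor
    · have h2 : t i * (a i j - a j i) = (s i - t i) * a j i := by linear_combination hcr
      have h3 : 0 ≤ t i * (a i j - a j i) := by
        rw [h2]; exact mul_nonneg (sub_nonneg.mpr hts) (ha j i)
      have h4 : (0:ℝ) ≤ a i j - a j i := by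
        refine le_of_mul_le_mul_left ?_ htpos
        rw [mul_zero]; exact h3
      linarith [hsj, htj]
    · linarith [hmeq, mul_nonneg (sub_nonneg.mpr hts) hm, hcr]

end QOTAux

/-- lower bound for the transport cost between commuting (conjugated
diagonal) density matrices, with a characterization of the equality case. -/
theorem qot_diag_conj_lower_bound (n : ℕ) (s t : Fin n → ℝ)
    (hs : (∀ i, 0 ≤ s i) ∧ ∑ i, s i = 1)
    (ht : (∀ i, 0 ≤ t i) ∧ ∑ i, t i = 1)
    (U : Matrix (Fin n) (Fin n) ℂ) (hU : Uᴴ * U = 1) :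
    ((1 / 2) * (⨆ i : Fin n, (Real.sqrt (s i) - Real.sqrt (t i)) ^ 2) ≤
      QOT (CQ n) (Uᴴ * Matrix.diagonal (fun i => (s i : ℂ)) * U)
        (Uᴴ * Matrix.diagonal (fun i => (t i : ℂ)) * U)) ∧
    (QOT (CQ n) (Uᴴ * Matrix.diagonal (fun i => (s i : ℂ)) * U)
        (Uᴴ * Matrix.diagonal (fun i => (t i : ℂ)) * U) =
        (1 / 2) * (⨆ i : Fin n, (Real.sqrt (s i) - Real.sqrt (t i)) ^ 2) ↔
      ∃ i : Fin n,
        (∀ j, j ≠ i → t j ≤ s j ∧ s i * s j ≤ t i * t j) ∨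
        (∀ j, j ≠ i → s j ≤ t j ∧ t i * t j ≤ s i * s j)) := by
  classical
  obtain ⟨hs0, hs1⟩ := hs
  obtain ⟨ht0, ht1⟩ := ht
  rcases Nat.eq_zero_or_pos n with rfl | hn
  · exfalso; simpa using hs1
  haveI : Nonempty (Fin n) := ⟨⟨0, hn⟩⟩
  obtain ⟨i₀, hi₀⟩ :=
    Finite.exists_max (fun i : Fin n => (Real.sqrt (s i) - Real.sqrt (t i)) ^ 2)
  have hbdd : BddAbove (Set.range fun i : Fin n =>
      (Real.sqrt (s i) - Real.sqrt (t i)) ^ 2) :=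
    Set.Finite.bddAbove (Set.finite_range _)
  have hM : (⨆ i : Fin n, (Real.sqrt (s i) - Real.sqrt (t i)) ^ 2)
      = (Real.sqrt (s i₀) - Real.sqrt (t i₀)) ^ 2 :=
    le_antisymm (ciSup_le hi₀) (le_ciSup hbdd i₀)
  have hconj := QOTAux.QOT_conj hU (Matrix.diagonal fun i => (s i : ℂ))
    (Matrix.diagonal fun i => (t i : ℂ))
  rw [hconj, hM]
  have hne : (QCouplings (Matrix.diagonal fun i : Fin n => (s i : ℂ))
      (Matrix.diagonal fun i : Fin n => (t i : ℂ))).Nonempty := by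
    have hc := QOTAux.prod_coupling hs0 ht0 hs1 ht1
    exact ⟨QOTAux.Rmat (fun j p => s j * t p),
      ⟨⟨QOTAux.Rmat_posSemidef hc.nonneg, QOTAux.Rmat_trace hc hs1⟩,
        QOTAux.Rmat_trB hc, QOTAux.Rmat_trA hc⟩⟩
  have hlower : ∀ R ∈ QCouplings (Matrix.diagonal fun i : Fin n => (s i : ℂ))
      (Matrix.diagonal fun i : Fin n => (t i : ℂ)), ∀ i : Fin n,
      (1/2) * (Real.sqrt (s i) - Real.sqrt (t i)) ^ 2 ≤ ((CQ n * R).trace).re := by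
    intro R hR i
    have hcoup := QOTAux.coupling_of_member hR
    have h1 := QOTAux.retrS_le_gsum hR.1.1
    have h2 := QOTAux.gsum_le hcoup hs1 i
    have h4 : (R.trace).re = 1 := by rw [hR.1.2, Complex.one_re]
    rw [QOTAux.cost_formula, h4]
    linarith
  have hbddBelow : BddBelow ((fun R => ((CQ n * R).trace).re) ''
      QCouplings (Matrix.diagonal fun i : Fin n => (s i : ℂ))
        (Matrix.diagonal fun i : Fin n => (t i : ℂ))) := by
    refine ⟨0, ?_⟩
    rintro r ⟨R, hR, rfl⟩
    have := hlower R hR i₀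
    nlinarith [sq_nonneg (Real.sqrt (s i₀) - Real.sqrt (t i₀))]
  have hpart1 : (1/2) * ((Real.sqrt (s i₀) - Real.sqrt (t i₀)) ^ 2)
      ≤ QOT (CQ n) (Matrix.diagonal fun i : Fin n => (s i : ℂ))
        (Matrix.diagonal fun i : Fin n => (t i : ℂ)) := by
    refine le_csInf (hne.image _) ?_
    rintro r ⟨R, hR, rfl⟩
    exact hlower R hR i₀
  refine ⟨hpart1, ?_, ?_⟩
  · -- equality implies the structure condition
    intro hqe
    obtain ⟨R, hR, hcostR⟩ := QOTAux.exists_min _ _ hne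
    have hcoup := QOTAux.coupling_of_member hR
    have h4 : (R.trace).re = 1 := by rw [hR.1.2, Complex.one_re]
    have hcf := QOTAux.cost_formula R
    rw [h4] at hcf
    have h1 := QOTAux.retrS_le_gsum hR.1.1
    have h2 := QOTAux.gsum_le hcoup hs1 i₀
    have hretr : (∑ x : Fin n × Fin n, R x.swap x).re
        = 1 - (Real.sqrt (s i₀) - Real.sqrt (t i₀)) ^ 2 := by
      rw [hqe] at hcostR
      rw [hcostR] at hcf
      linarith
    have hgeq : QOTAux.gsum (fun j p => (R (j, p) (j, p)).re)
        = 1 - (Real.sqrt (s i₀) - Real.sqrt (t i₀)) ^ 2 :=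
      le_antisymm h2 (by linarith)
    rcases le_or_gt (t i₀) (s i₀) with hts | hts
    · exact ⟨i₀, Or.inr (QOTAux.gsum_eq_extract hcoup hs1 i₀ hts hgeq)⟩
    · refine ⟨i₀, Or.inl ?_⟩
      have hcoupT := hcoup.transpose
      have hgT : QOTAux.gsum (fun j p => (R (p, j) (p, j)).re)
          = 1 - (Real.sqrt (t i₀) - Real.sqrt (s i₀)) ^ 2 := by
        have := QOTAux.gsum_transpose (fun j p => (R (j, p) (j, p)).re)
        rw [this, hgeq]
        ring
      exact QOTAux.gsum_eq_extract hcoupT ht1 i₀ (le_of_lt hts) hgT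
  · -- the structure condition implies equality
    rintro ⟨i, hor⟩
    rcases hor with hd1 | hd2
    · -- first disjunct : roles of s and t swapped
      obtain ⟨a, hcoup, hg⟩ := QOTAux.exists_optimal_coupling ht0 hs0 ht1 hs1 i hd1
      have hmax := QOTAux.cond_implies_max ht0 hs0 ht1 hs1 i hd1
      have hsymsq : ∀ u v : ℝ, (u - v) ^ 2 = (v - u) ^ 2 := fun u v => by ring
      have hgi : (Real.sqrt (t i) - Real.sqrt (s i)) ^ 2
          = (Real.sqrt (s i₀) - Real.sqrt (t i₀)) ^ 2 := by
        apply le_antisymm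
        · rw [hsymsq]; exact hi₀ i
        · rw [hsymsq (Real.sqrt (s i₀))]; exact hmax i₀
      have hcoupT := hcoup.transpose
      have hgT : QOTAux.gsum (fun j p => a p j)
          = 1 - (Real.sqrt (s i₀) - Real.sqrt (t i₀)) ^ 2 := by
        rw [QOTAux.gsum_transpose, hg, hgi]
      have hcost : ((CQ n * QOTAux.Rmat (fun j p => a p j)).trace).re
          = (1/2) * ((Real.sqrt (s i₀) - Real.sqrt (t i₀)) ^ 2) := by
        rw [QOTAux.Rmat_cost hcoupT hs1, hgT]
        ring
      apply le_antisymm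
      · apply csInf_le hbddBelow
        exact ⟨QOTAux.Rmat (fun j p => a p j),
          ⟨⟨QOTAux.Rmat_posSemidef hcoupT.nonneg, QOTAux.Rmat_trace hcoupT hs1⟩,
            QOTAux.Rmat_trB hcoupT, QOTAux.Rmat_trA hcoupT⟩, hcost⟩
      · exact hpart1
    · obtain ⟨a, hcoup, hg⟩ := QOTAux.exists_optimal_coupling hs0 ht0 hs1 ht1 i hd2
      have hmax := QOTAux.cond_implies_max hs0 ht0 hs1 ht1 i hd2
      have hgi : (Real.sqrt (s i) - Real.sqrt (t i)) ^ 2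
          = (Real.sqrt (s i₀) - Real.sqrt (t i₀)) ^ 2 :=
        le_antisymm (hi₀ i) (hmax i₀)
      have hcost : ((CQ n * QOTAux.Rmat a).trace).re
          = (1/2) * ((Real.sqrt (s i₀) - Real.sqrt (t i₀)) ^ 2) := by
        rw [QOTAux.Rmat_cost hcoup hs1, hg, hgi]
        ring
      apply le_antisymm
      · apply csInf_le hbddBelow
        exact ⟨QOTAux.Rmat a,
          ⟨⟨QOTAux.Rmat_posSemidef hcoup.nonneg, QOTAux.Rmat_trace hcoup hs1⟩,
            QOTAux.Rmat_trB hcoup, QOTAux.Rmat_trA hcoup⟩, hcost⟩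
      · exact hpart1
end

section
/- For all ρA, ρB ∈ Ω_n, T_{C^Q}(ρA, ρB) ≥ (1/2) · ( sup over unitary n×n complex matrices U of | √(Re((Uᴴ * ρA * U) 0 0)) − √(Re((Uᴴ * ρB * U) 0 0)) | )², where (·) 0 0 denotes the first diagonal entry and the supremum is attained by compactness of the unitary group. -/
open Matrix ComplexOrder

lemma psd_pair {k : Type*} [Fintype k] [DecidableEq k] {M : Matrix k k ℂ} (h : M.PosSemidef)
    (X Y : k) (μ : ℝ) :
    2*μ*(M X Y).re ≤ μ^2 * (M X X).re + (M Y Y).re := by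
  have h0 := h.re_dotProduct_nonneg ((μ:ℂ) • (Pi.single X 1 : k → ℂ) - (Pi.single Y 1 : k → ℂ))
  have hyx : M Y X = star (M X Y) := by
    conv_lhs => rw [← h.1]
    simp [conjTranspose_apply]
  simp only [mulVec_sub, mulVec_smul, mulVec_single, star_sub, star_smul, Pi.star_apply,
    sub_dotProduct, dotProduct_sub, smul_dotProduct, dotProduct_smul, single_dotProduct,
    ← Pi.single_star, hyx, mul_one, star_one, smul_eq_mul, Complex.star_def,
    Complex.conj_ofReal, RCLike.re_to_complex, MulOpposite.op_one, one_smul, col_apply, one_mul] at h0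
  simp only [Complex.sub_re, Complex.mul_re, Complex.ofReal_re, Complex.ofReal_im,
    Complex.conj_re, Complex.conj_im, Complex.sub_im, Complex.mul_im, Complex.one_re, Complex.one_im] at h0
  nlinarith [h0]

lemma psd_diag_nonneg {k : Type*} [Fintype k] [DecidableEq k] {M : Matrix k k ℂ}
    (h : M.PosSemidef) (X : k) : 0 ≤ (M X X).re := by
  have h0 := h.re_dotProduct_nonneg (Pi.single X 1 : k → ℂ)
  simpa [mulVec_single, ← Pi.single_star, single_dotProduct] using h0

lemma psd_cs {k : Type*} [Fintype k] [DecidableEq k] {M : Matrix k k ℂ}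
    (h : M.PosSemidef) (X Y : k) :
    (M X Y).re ≤ Real.sqrt ((M X X).re) * Real.sqrt ((M Y Y).re) := by
  have hx := psd_diag_nonneg h X
  have hy := psd_diag_nonneg h Y
  have hd : discrim ((M X X).re) (-(2*(M X Y).re)) ((M Y Y).re) ≤ 0 := by
    apply discrim_le_zero
    intro μ
    have := psd_pair h X Y μ
    nlinarith
  rw [discrim] at hd
  have h1 : ((M X Y).re)^2 ≤ (M X X).re * (M Y Y).re := by nlinarith
  calc (M X Y).re ≤ |(M X Y).re| := le_abs_self _
    _ = Real.sqrt (((M X Y).re)^2) := (Real.sqrt_sq_eq_abs _).symm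
    _ ≤ Real.sqrt ((M X X).re * (M Y Y).re) := Real.sqrt_le_sqrt h1
    _ = Real.sqrt ((M X X).re) * Real.sqrt ((M Y Y).re) := Real.sqrt_mul hx _

lemma sqrt_diff_sq_le {a b c : ℝ} (hc : 0 ≤ c) (hca : c ≤ a) (hcb : c ≤ b) :
    (Real.sqrt a - Real.sqrt b)^2 ≤ a + b - 2*c - 2*(Real.sqrt (a-c) * Real.sqrt (b-c)) := by
  have ha : 0 ≤ a := hc.trans hca
  have hb : 0 ≤ b := hc.trans hcb
  have sa := Real.sq_sqrt ha
  have sb := Real.sq_sqrt hb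
  have sac := Real.sq_sqrt (by linarith : (0:ℝ) ≤ a - c)
  have sbc := Real.sq_sqrt (by linarith : (0:ℝ) ≤ b - c)
  have na := Real.sqrt_nonneg a
  have nb := Real.sqrt_nonneg b
  have nac := Real.sqrt_nonneg (a-c)
  have nbc := Real.sqrt_nonneg (b-c)
  have h1 : c ≤ Real.sqrt a * Real.sqrt b := by
    have : Real.sqrt c * Real.sqrt c ≤ Real.sqrt a * Real.sqrt b :=
      mul_le_mul (Real.sqrt_le_sqrt hca) (Real.sqrt_le_sqrt hcb) (Real.sqrt_nonneg c) na
    rwa [Real.mul_self_sqrt hc] at this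
  have h2 : (Real.sqrt (a-c) * Real.sqrt (b-c))^2 ≤ (Real.sqrt a * Real.sqrt b - c)^2 := by
    have key : 2 * (Real.sqrt a * Real.sqrt b) ≤ a + b := by
      nlinarith [sq_nonneg (Real.sqrt a - Real.sqrt b)]
    nlinarith [mul_pow (Real.sqrt (a-c)) (Real.sqrt (b-c)) 2,
      mul_pow (Real.sqrt a) (Real.sqrt b) 2, mul_le_mul_of_nonneg_left key hc]
  have h3 : Real.sqrt (a-c) * Real.sqrt (b-c) ≤ Real.sqrt a * Real.sqrt b - c :=
    le_of_pow_le_pow_left₀ two_ne_zero (by linarith) h2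
  nlinarith [h3]

lemma kron_mul {m n : ℕ} (A C : Matrix (Fin m) (Fin m) ℂ) (B D : Matrix (Fin n) (Fin n) ℂ) :
    kron A B * kron C D = kron (A * C) (B * D) := by
  ext x y
  simp only [kron, mul_apply, of_apply, Fintype.sum_prod_type]
  rw [Finset.sum_mul_sum]
  refine Finset.sum_congr rfl fun z1 _ => Finset.sum_congr rfl fun z2 _ => by ring

lemma kron_conjTranspose {m n : ℕ} (A : Matrix (Fin m) (Fin m) ℂ)
    (B : Matrix (Fin n) (Fin n) ℂ) : (kron A B)ᴴ = kron Aᴴ Bᴴ := by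
  ext x y
  simp [kron, conjTranspose_apply, mul_comm]

lemma kron_one {m n : ℕ} : kron (1 : Matrix (Fin m) (Fin m) ℂ) (1 : Matrix (Fin n) (Fin n) ℂ)
    = 1 := by
  ext x y
  simp only [kron, of_apply, one_apply, Prod.ext_iff]
  by_cases h1 : x.1 = y.1 <;> by_cases h2 : x.2 = y.2 <;> simp [h1, h2]

lemma expand_conj {n : ℕ} (W R : Matrix (Fin n × Fin n) (Fin n × Fin n) ℂ)
    (a b : Fin n × Fin n) :
    (Wᴴ * R * W) a b = ∑ x, ∑ y, star (W x a) * R x y * W y b := by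
  simp only [mul_apply, conjTranspose_apply, Finset.sum_mul]
  rw [Finset.sum_comm]

lemma trB_conj {n : ℕ} (U : Matrix (Fin n) (Fin n) ℂ) (hU : U * Uᴴ = 1)
    (R : Matrix (Fin n × Fin n) (Fin n × Fin n) ℂ) :
    trB ((kron U U)ᴴ * R * (kron U U)) = Uᴴ * trB R * U := by
  have hδ : ∀ x2 y2 : Fin n, ∑ p, U y2 p * star (U x2 p) = if y2 = x2 then 1 else 0 := by
    intro x2 y2
    have := congrFun (congrFun hU y2) x2
    simpa [mul_apply, conjTranspose_apply, one_apply] using this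
  ext i j
  show ∑ p, ((kron U U)ᴴ * R * (kron U U)) (i,p) (j,p) = _
  calc ∑ p, ((kron U U)ᴴ * R * (kron U U)) (i,p) (j,p)
      = ∑ p, ∑ x, ∑ y, star ((kron U U) x (i,p)) * R x y * (kron U U) y (j,p) := by
        exact Finset.sum_congr rfl fun p _ => expand_conj _ _ _ _
    _ = ∑ x, ∑ y, ∑ p, star ((kron U U) x (i,p)) * R x y * (kron U U) y (j,p) := by
        rw [Finset.sum_comm]
        apply Finset.sum_congr rfl; intros
        rw [Finset.sum_comm]
    _ = ∑ x : Fin n × Fin n, ∑ y : Fin n × Fin n,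
          (star (U x.1 i) * R x y * U y.1 j) * (if y.2 = x.2 then 1 else 0) := by
        apply Finset.sum_congr rfl; intro x _
        apply Finset.sum_congr rfl; intro y _
        rw [← hδ x.2 y.2, Finset.mul_sum]
        apply Finset.sum_congr rfl; intro p _
        simp only [kron, of_apply, star_mul']
        ring
    _ = ∑ x : Fin n × Fin n, ∑ y1, star (U x.1 i) * R x (y1, x.2) * U y1 j := by
        apply Finset.sum_congr rfl; intro x _
        rw [Fintype.sum_prod_type]
        apply Finset.sum_congr rfl; intro y1 _
        simp [mul_ite, Finset.sum_ite_eq', Finset.sum_ite_eq]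
    _ = ∑ x1, ∑ y1, ∑ x2, star (U x1 i) * R (x1,x2) (y1,x2) * U y1 j := by
        rw [Fintype.sum_prod_type]
        exact Finset.sum_congr rfl fun x1 _ => Finset.sum_comm
    _ = ∑ y1, ∑ x1, ∑ x2, star (U x1 i) * R (x1,x2) (y1,x2) * U y1 j := Finset.sum_comm
    _ = (Uᴴ * trB R * U) i j := by
        simp only [mul_apply, conjTranspose_apply, trB, of_apply,
          Finset.sum_mul, Finset.mul_sum]

lemma trA_conj {n : ℕ} (U : Matrix (Fin n) (Fin n) ℂ) (hU : U * Uᴴ = 1)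
    (R : Matrix (Fin n × Fin n) (Fin n × Fin n) ℂ) :
    trA ((kron U U)ᴴ * R * (kron U U)) = Uᴴ * trA R * U := by
  have hδ : ∀ x1 y1 : Fin n, ∑ i, U y1 i * star (U x1 i) = if y1 = x1 then 1 else 0 := by
    intro x1 y1
    have := congrFun (congrFun hU y1) x1
    simpa [mul_apply, conjTranspose_apply, one_apply] using this
  ext p q
  show ∑ i, ((kron U U)ᴴ * R * (kron U U)) (i,p) (i,q) = _
  calc ∑ i, ((kron U U)ᴴ * R * (kron U U)) (i,p) (i,q)
      = ∑ i, ∑ x, ∑ y, star ((kron U U) x (i,p)) * R x y * (kron U U) y (i,q) := by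
        exact Finset.sum_congr rfl fun i _ => expand_conj _ _ _ _
    _ = ∑ x, ∑ y, ∑ i, star ((kron U U) x (i,p)) * R x y * (kron U U) y (i,q) := by
        rw [Finset.sum_comm]
        apply Finset.sum_congr rfl; intros
        rw [Finset.sum_comm]
    _ = ∑ x : Fin n × Fin n, ∑ y : Fin n × Fin n,
          (star (U x.2 p) * R x y * U y.2 q) * (if y.1 = x.1 then 1 else 0) := by
        apply Finset.sum_congr rfl; intro x _
        apply Finset.sum_congr rfl; intro y _
        rw [← hδ x.1 y.1, Finset.mul_sum]
        apply Finset.sum_congr rfl; intro i _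
        simp only [kron, of_apply, star_mul']
        ring
    _ = ∑ x : Fin n × Fin n, ∑ y2, star (U x.2 p) * R x (x.1, y2) * U y2 q := by
        apply Finset.sum_congr rfl; intro x _
        rw [Fintype.sum_prod_type]
        rw [Finset.sum_comm]
        apply Finset.sum_congr rfl; intro y2 _
        simp [mul_ite, Finset.sum_ite_eq', Finset.sum_ite_eq]
    _ = ∑ x2, ∑ x1, ∑ y2, star (U x2 p) * R (x1,x2) (x1,y2) * U y2 q := by
        rw [Fintype.sum_prod_type]
        exact Finset.sum_comm
    _ = ∑ x2, ∑ y2, ∑ x1, star (U x2 p) * R (x1,x2) (x1,y2) * U y2 q := by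
        exact Finset.sum_congr rfl fun x2 _ => Finset.sum_comm
    _ = ∑ y2, ∑ x2, ∑ x1, star (U x2 p) * R (x1,x2) (x1,y2) * U y2 q := Finset.sum_comm
    _ = (Uᴴ * trA R * U) p q := by
        simp only [mul_apply, conjTranspose_apply, trA, of_apply,
          Finset.sum_mul, Finset.mul_sum]

lemma swap_mul_kron {n : ℕ} (U : Matrix (Fin n) (Fin n) ℂ) :
    swapM n * kron U U = kron U U * swapM n := by
  ext x y
  simp only [mul_apply, swapM, kron, of_apply]
  rw [Finset.sum_eq_single ((x.2, x.1) : Fin n × Fin n),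
    Finset.sum_eq_single ((y.2, y.1) : Fin n × Fin n)]
  · simp [mul_comm]
  · intro z _ hz
    have : ¬(z.1 = y.2 ∧ z.2 = y.1) := by
      rintro ⟨h1, h2⟩; exact hz (by ext <;> simp [h1, h2])
    simp [this]
  · simp
  · intro z _ hz
    have : ¬(x.1 = z.2 ∧ x.2 = z.1) := by
      rintro ⟨h1, h2⟩; exact hz (by ext <;> simp [← h1, ← h2])
    simp [this]
  · simp

lemma CQ_mul_kron {n : ℕ} (U : Matrix (Fin n) (Fin n) ℂ) :
    CQ n * kron U U = kron U U * CQ n := by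
  rw [CQ, smul_mul_assoc, mul_smul_comm, sub_mul, mul_sub, one_mul, mul_one, swap_mul_kron]

lemma trace_CQ_conj {n : ℕ} (W : Matrix (Fin n × Fin n) (Fin n × Fin n) ℂ)
    (hWc : CQ n * W = W * CQ n) (hW1 : W * Wᴴ = 1) (hW2 : Wᴴ * W = 1)
    (R : Matrix (Fin n × Fin n) (Fin n × Fin n) ℂ) :
    (CQ n * (Wᴴ * R * W)).trace = (CQ n * R).trace := by
  have hc : CQ n * Wᴴ = Wᴴ * CQ n := by
    calc CQ n * Wᴴ = Wᴴ * W * CQ n * Wᴴ := by rw [hW2, one_mul]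
      _ = Wᴴ * (W * CQ n) * Wᴴ := by rw [Matrix.mul_assoc Wᴴ W (CQ n)]
      _ = Wᴴ * (CQ n * W) * Wᴴ := by rw [hWc]
      _ = Wᴴ * CQ n * (W * Wᴴ) := by
          rw [← Matrix.mul_assoc Wᴴ (CQ n) W, Matrix.mul_assoc (Wᴴ * CQ n) W Wᴴ]
      _ = Wᴴ * CQ n := by rw [hW1, Matrix.mul_one]
  calc (CQ n * (Wᴴ * R * W)).trace = (Wᴴ * (CQ n * R * W)).trace := by
        rw [← Matrix.mul_assoc (CQ n) (Wᴴ * R) W, ← Matrix.mul_assoc (CQ n) Wᴴ R, hc,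
          Matrix.mul_assoc Wᴴ (CQ n) R, Matrix.mul_assoc Wᴴ (CQ n * R) W]
    _ = ((CQ n * R * W) * Wᴴ).trace := trace_mul_comm _ _
    _ = (CQ n * R).trace := by rw [Matrix.mul_assoc (CQ n * R) W Wᴴ, hW1, Matrix.mul_one]

lemma core (n : ℕ) [NeZero n] {R : Matrix (Fin n × Fin n) (Fin n × Fin n) ℂ}
    (hR : R.PosSemidef) (htr1 : R.trace = 1) :
    (Real.sqrt (((trB R) 0 0).re) - Real.sqrt (((trA R) 0 0).re))^2
      ≤ 2 * ((CQ n * R).trace).re := by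
  have hre : ∀ X Y, (R X Y).re = (R Y X).re := by
    intro X Y
    conv_lhs => rw [← hR.1]
    simp [conjTranspose_apply]
  set a : ℝ := ((trB R) 0 0).re with ha_def
  set b : ℝ := ((trA R) 0 0).re with hb_def
  set c : ℝ := (R (0,0) (0,0)).re with hc_def
  have ha_sum : a = ∑ p, (R (0,p) (0,p)).re := by
    rw [ha_def]; simp [trB, Complex.re_sum]
  have hb_sum : b = ∑ i, (R (i,0) (i,0)).re := by
    rw [hb_def]; simp [trA, Complex.re_sum]
  -- the quadratic form values
  set q : Fin n × Fin n → ℝ :=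
    fun x => (R x x).re + (R (x.2,x.1) (x.2,x.1)).re - 2*(R x (x.2,x.1)).re with hq_def
  have hq0 : ∀ x, 0 ≤ q x := by
    intro x
    have := psd_pair hR x (x.2, x.1) 1
    simp only [hq_def]
    nlinarith
  have hqsym : ∀ x : Fin n × Fin n, q (x.2, x.1) = q x := by
    intro x; simp only [hq_def, hre (x.2,x.1) x]; ring
  -- trace formula
  have htrace : 2 * ((CQ n * R).trace).re = 1 - ∑ x : Fin n × Fin n, (R (x.2, x.1) x).re := by
    have hs : (swapM n * R).trace = ∑ x : Fin n × Fin n, R (x.2, x.1) x := by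
      simp only [trace, Matrix.diag, mul_apply, swapM, of_apply]
      apply Finset.sum_congr rfl
      intro x _
      rw [Finset.sum_eq_single ((x.2, x.1) : Fin n × Fin n)]
      · simp
      · intro y _ hy
        have : ¬(x.1 = y.2 ∧ x.2 = y.1) := by
          rintro ⟨h1, h2⟩; exact hy (by ext <;> simp [← h1, ← h2])
        simp [this]
      · simp
    have : (CQ n * R).trace = (1/2 : ℂ) * (1 - ∑ x : Fin n × Fin n, R (x.2, x.1) x) := by
      rw [CQ, smul_mul_assoc, trace_smul, sub_mul, one_mul, trace_sub, htr1, hs, smul_eq_mul]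
    rw [this]
    simp [Complex.mul_re, Complex.re_sum, Complex.im_sum]
  -- 1 = sum of diagonal
  have hdiag1 : (1:ℝ) = ∑ x : Fin n × Fin n, (R x x).re := by
    have : (R.trace).re = 1 := by rw [htr1]; simp
    rw [← this]; simp [trace, Matrix.diag, Complex.re_sum]
  -- symmetrization identities
  have hswap1 : ∑ x : Fin n × Fin n, (R (x.2,x.1) (x.2,x.1)).re
      = ∑ x : Fin n × Fin n, (R x x).re :=
    Fintype.sum_equiv (Equiv.prodComm (Fin n) (Fin n)) _ _ (fun x => rfl)
  have hswap2 : ∑ x : Fin n × Fin n, (R (x.2,x.1) x).re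
      = ∑ x : Fin n × Fin n, (R x (x.2,x.1)).re :=
    Fintype.sum_equiv (Equiv.prodComm (Fin n) (Fin n)) _ _ (fun x => by
      rfl)
  have key1 : 2 * ((CQ n * R).trace).re = (1/2) * ∑ x : Fin n × Fin n, q x := by
    rw [htrace]
    simp only [hq_def]
    rw [Finset.sum_sub_distrib, Finset.sum_add_distrib, hswap1, ← Finset.mul_sum, hswap2]
    linarith [hdiag1]
  -- restrict to row/column 0
  have key2 : 2 * ∑ p, q (0, p) ≤ ∑ x : Fin n × Fin n, q x := by
    rw [Fintype.sum_prod_type]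
    have h0 : ∑ p, q (0, p) + ∑ i ∈ Finset.univ.erase 0, ∑ p, q (i, p)
        = ∑ i, ∑ p, q (i, p) :=
      Finset.add_sum_erase (Finset.univ : Finset (Fin n)) (fun i => ∑ p, q (i, p))
        (Finset.mem_univ 0)
    have h1 : ∀ i ∈ Finset.univ.erase (0 : Fin n), q (i, 0) ≤ ∑ p, q (i, p) := by
      intro i _
      exact Finset.single_le_sum (fun p _ => hq0 (i, p)) (Finset.mem_univ 0)
    have h2 : ∑ i ∈ Finset.univ.erase (0 : Fin n), q (i, 0)
        ≤ ∑ i ∈ Finset.univ.erase 0, ∑ p, q (i, p) := Finset.sum_le_sum h1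
    have h3 : ∑ i ∈ Finset.univ.erase (0 : Fin n), q (i, 0)
        = ∑ i ∈ Finset.univ.erase 0, q (0, i) := by
      apply Finset.sum_congr rfl
      intro i _
      exact hqsym (0, i)
    have h4 : ∑ i ∈ Finset.univ.erase (0 : Fin n), q (0, i) = ∑ i, q (0, i) := by
      apply Finset.sum_erase
      simp only [hq_def]
      ring
    linarith
  have key3 : ∑ p, q (0, p)
      = a + b - 2 * ∑ p, (R (0,p) (p,0)).re := by
    simp only [hq_def]
    rw [Finset.sum_sub_distrib, Finset.sum_add_distrib, ← Finset.mul_sum, ha_sum, hb_sum]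
  have hxnn : ∀ p : Fin n, 0 ≤ (R (0,p) (0,p)).re := fun p => psd_diag_nonneg hR _
  have hynn : ∀ p : Fin n, 0 ≤ (R (p,0) (p,0)).re := fun p => psd_diag_nonneg hR _
  have hac : ∑ p ∈ Finset.univ.erase (0:Fin n), (R (0,p) (0,p)).re = a - c := by
    rw [Finset.sum_erase_eq_sub (Finset.mem_univ 0), ← ha_sum]
  have hbc : ∑ p ∈ Finset.univ.erase (0:Fin n), (R (p,0) (p,0)).re = b - c := by
    rw [Finset.sum_erase_eq_sub (Finset.mem_univ 0), ← hb_sum]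
  have hca : c ≤ a := by
    have : 0 ≤ a - c := hac ▸ Finset.sum_nonneg (fun p _ => hxnn p)
    linarith
  have hcb : c ≤ b := by
    have : 0 ≤ b - c := hbc ▸ Finset.sum_nonneg (fun p _ => hynn p)
    linarith
  have hc0 : 0 ≤ c := psd_diag_nonneg hR _
  have key4 : ∑ p, (R (0,p) (p,0)).re ≤ c + Real.sqrt (a-c) * Real.sqrt (b-c) := by
    rw [← Finset.add_sum_erase _ _ (Finset.mem_univ (0 : Fin n))]
    have hcs : ∑ p ∈ Finset.univ.erase (0:Fin n), (R (0,p) (p,0)).re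
        ≤ ∑ p ∈ Finset.univ.erase (0:Fin n),
            Real.sqrt ((R (0,p) (0,p)).re) * Real.sqrt ((R (p,0) (p,0)).re) :=
      Finset.sum_le_sum (fun p _ => psd_cs hR _ _)
    have hCS2 : (∑ p ∈ Finset.univ.erase (0:Fin n),
          Real.sqrt ((R (0,p) (0,p)).re) * Real.sqrt ((R (p,0) (p,0)).re))^2
        ≤ (a - c) * (b - c) := by
      calc (∑ p ∈ Finset.univ.erase (0:Fin n),
            Real.sqrt ((R (0,p) (0,p)).re) * Real.sqrt ((R (p,0) (p,0)).re))^2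
          ≤ (∑ p ∈ Finset.univ.erase (0:Fin n), Real.sqrt ((R (0,p) (0,p)).re)^2) *
            (∑ p ∈ Finset.univ.erase (0:Fin n), Real.sqrt ((R (p,0) (p,0)).re)^2) :=
            Finset.sum_mul_sq_le_sq_mul_sq _ _ _
        _ = (a - c) * (b - c) := by
            rw [← hac, ← hbc]
            congr 1
            · exact Finset.sum_congr rfl (fun p _ => Real.sq_sqrt (hxnn p))
            · exact Finset.sum_congr rfl (fun p _ => Real.sq_sqrt (hynn p))
    have hsum_nn : 0 ≤ ∑ p ∈ Finset.univ.erase (0:Fin n),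
        Real.sqrt ((R (0,p) (0,p)).re) * Real.sqrt ((R (p,0) (p,0)).re) :=
      Finset.sum_nonneg (fun p _ => by positivity)
    have : ∑ p ∈ Finset.univ.erase (0:Fin n),
        Real.sqrt ((R (0,p) (0,p)).re) * Real.sqrt ((R (p,0) (p,0)).re)
        ≤ Real.sqrt (a-c) * Real.sqrt (b-c) := by
      rw [← Real.sqrt_mul (by linarith) (b-c)]
      rw [← Real.sqrt_sq hsum_nn]
      exact Real.sqrt_le_sqrt hCS2
    linarith
  have final := sqrt_diff_sq_le hc0 hca hcb
  rw [key1]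
  have : a + b - 2*c - 2*(Real.sqrt (a-c) * Real.sqrt (b-c)) ≤ ∑ p, q (0, p) := by
    rw [key3]; linarith
  linarith

lemma kron_density {m n : ℕ} {A : Matrix (Fin m) (Fin m) ℂ} {B : Matrix (Fin n) (Fin n) ℂ}
    (hA : IsDensityMatrix A) (hB : IsDensityMatrix B) :
    IsDensityMatrix (kron A B) ∧ trB (kron A B) = A ∧ trA (kron A B) = B := by
  open scoped MatrixOrder in
  obtain ⟨P, hP⟩ := CStarAlgebra.nonneg_iff_eq_star_mul_self.mp hA.1.nonneg
  open scoped MatrixOrder in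
  obtain ⟨Q, hQ⟩ := CStarAlgebra.nonneg_iff_eq_star_mul_self.mp hB.1.nonneg
  rw [star_eq_conjTranspose] at hP hQ
  have htrB : Complex.re B.trace = 1 ∧ Complex.im B.trace = 0 := by
    rw [hB.2]; simp
  refine ⟨⟨?_, ?_⟩, ?_, ?_⟩
  · rw [hP, hQ, ← kron_mul, ← kron_conjTranspose]
    exact Matrix.posSemidef_conjTranspose_mul_self _
  · show ∑ x : Fin m × Fin n, kron A B x x = 1
    calc ∑ x : Fin m × Fin n, kron A B x x = (∑ i, A i i) * (∑ p, B p p) := by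
          rw [Fintype.sum_prod_type, Finset.sum_mul_sum]
          rfl
      _ = 1 := by
          have h1 : (∑ i, A i i) = A.trace := rfl
          have h2 : (∑ p, B p p) = B.trace := rfl
          rw [h1, h2, hA.2, hB.2, mul_one]
  · ext i j
    show ∑ p, kron A B (i,p) (j,p) = A i j
    calc ∑ p, kron A B (i,p) (j,p) = A i j * ∑ p, B p p := by
          rw [Finset.mul_sum]; rfl
      _ = A i j := by rw [show (∑ p, B p p) = B.trace from rfl, hB.2, mul_one]
  · ext p q
    show ∑ i, kron A B (i,p) (i,q) = B p q
    calc ∑ i, kron A B (i,p) (i,q) = (∑ i, A i i) * B p q := by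
          rw [Finset.sum_mul]; rfl
      _ = B p q := by rw [show (∑ i, A i i) = A.trace from rfl, hA.2, one_mul]

/-- a lower bound for `T_{C^Q}` in terms of the maximal difference of
square roots of first diagonal entries over all unitary conjugations. -/
theorem qot_CQ_diag_lower_bound (n : ℕ) [NeZero n]
    (ρA ρB : Matrix (Fin n) (Fin n) ℂ)
    (hA : IsDensityMatrix ρA) (hB : IsDensityMatrix ρB) :
    (1 / 2) * (sSup {r : ℝ | ∃ U : Matrix (Fin n) (Fin n) ℂ, Uᴴ * U = 1 ∧
        r = |Real.sqrt (((Uᴴ * ρA * U) 0 0).re) -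
              Real.sqrt (((Uᴴ * ρB * U) 0 0).re)|}) ^ 2 ≤
      QOT (CQ n) ρA ρB := by
  set S := {r : ℝ | ∃ U : Matrix (Fin n) (Fin n) ℂ, Uᴴ * U = 1 ∧
      r = |Real.sqrt (((Uᴴ * ρA * U) 0 0).re) -
            Real.sqrt (((Uᴴ * ρB * U) 0 0).re)|} with hS_def
  obtain ⟨hkd, hktrB, hktrA⟩ := kron_density hA hB
  have hmem : kron ρA ρB ∈ QCouplings ρA ρB := ⟨hkd, hktrB, hktrA⟩
  have himg : ((fun R => ((CQ n * R).trace).re) '' QCouplings ρA ρB).Nonempty :=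
    ⟨_, Set.mem_image_of_mem _ hmem⟩
  rw [QOT]
  apply le_csInf himg
  rintro t ⟨R, ⟨⟨hRpsd, hRtr⟩, hRA, hRB⟩, rfl⟩
  simp only
  have hbound : ∀ r ∈ S, r^2 ≤ 2 * ((CQ n * R).trace).re := by
    rintro r ⟨U, hU, rfl⟩
    have hUU : U * Uᴴ = 1 := mul_eq_one_comm.mp hU
    have hW2 : (kron U U)ᴴ * (kron U U) = 1 := by
      rw [kron_conjTranspose, kron_mul, hU, kron_one]
    have hW1 : (kron U U) * (kron U U)ᴴ = 1 := by
      rw [kron_conjTranspose, kron_mul, hUU, kron_one]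
    have hR'psd : ((kron U U)ᴴ * R * (kron U U)).PosSemidef :=
      hRpsd.conjTranspose_mul_mul_same _
    have hR'tr : ((kron U U)ᴴ * R * (kron U U)).trace = 1 := by
      rw [trace_mul_comm ((kron U U)ᴴ * R) (kron U U), ← Matrix.mul_assoc, hW1, one_mul, hRtr]
    have hcore := core n hR'psd hR'tr
    rw [trB_conj U hUU R, trA_conj U hUU R, hRA, hRB,
      trace_CQ_conj _ (CQ_mul_kron U) hW1 hW2 R] at hcore
    rw [sq_abs]
    exact hcore
  have hSnn : ∀ r ∈ S, 0 ≤ r := by rintro r ⟨U, hU, rfl⟩; exact abs_nonneg _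
  have hne : S.Nonempty := by
    refine ⟨_, (1 : Matrix (Fin n) (Fin n) ℂ), ?_, rfl⟩
    simp
  obtain ⟨r0, hr0⟩ := hne
  have ht0 : 0 ≤ 2 * ((CQ n * R).trace).re := le_trans (sq_nonneg r0) (hbound r0 hr0)
  have hsup_le : sSup S ≤ Real.sqrt (2 * ((CQ n * R).trace).re) :=
    Real.sSup_le (fun r hr => Real.le_sqrt_of_sq_le (hbound r hr)) (Real.sqrt_nonneg _)
  have hsup_nn : 0 ≤ sSup S := Real.sSup_nonneg hSnn
  have hsq : (sSup S)^2 ≤ 2 * ((CQ n * R).trace).re := by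
    have h2 := pow_le_pow_left₀ hsup_nn hsup_le 2
    rwa [Real.sq_sqrt ht0] at h2
  linarith
end

section
/- Let ρA ∈ Ω_m and ρB ∈ Ω_n, and let R be an extreme point of the convex set Γ^Q(ρA, ρB), i.e., R ∈ Γ^Q(ρA, ρB) and whenever R = a • R₁ + (1−a) • R₂ with R₁, R₂ ∈ Γ^Q(ρA, ρB) and 0 < a < 1, then R₁ = R₂ = R. Then the rank of R satisfies (rank R)² ≤ m² + n² − 1. -/
open Matrix ComplexOrder

/- ### Auxiliary lemmas -/

/-- `trB` as a `ℂ`-linear map. -/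
noncomputable def trBL (m n : ℕ) :
    Matrix (Fin m × Fin n) (Fin m × Fin n) ℂ →ₗ[ℂ] Matrix (Fin m) (Fin m) ℂ where
  toFun := trB
  map_add' X Y := by ext i j; simp [trB, Finset.sum_add_distrib]
  map_smul' c X := by ext i j; simp [trB, Finset.mul_sum]

/-- `trA` as a `ℂ`-linear map. -/
noncomputable def trAL (m n : ℕ) :
    Matrix (Fin m × Fin n) (Fin m × Fin n) ℂ →ₗ[ℂ] Matrix (Fin n) (Fin n) ℂ where
  toFun := trA
  map_add' X Y := by ext i j; simp [trA, Finset.sum_add_distrib]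
  map_smul' c X := by ext i j; simp [trA, Finset.mul_sum]

lemma trB_conjT {m n : ℕ} (X : Matrix (Fin m × Fin n) (Fin m × Fin n) ℂ) :
    trB Xᴴ = (trB X)ᴴ := by
  ext i j
  simp [trB, Matrix.conjTranspose_apply]

lemma trA_conjT {m n : ℕ} (X : Matrix (Fin m × Fin n) (Fin m × Fin n) ℂ) :
    trA Xᴴ = (trA X)ᴴ := by
  ext i j
  simp [trA, Matrix.conjTranspose_apply]

lemma trace_trB {m n : ℕ} (X : Matrix (Fin m × Fin n) (Fin m × Fin n) ℂ) :
    (trB X).trace = X.trace := by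
  simp [trB, Matrix.trace, Matrix.diag, Fintype.sum_prod_type]

lemma trace_trA {m n : ℕ} (X : Matrix (Fin m × Fin n) (Fin m × Fin n) ℂ) :
    (trA X).trace = X.trace := by
  simp only [trA, Matrix.trace, Matrix.diag, Matrix.of_apply, Fintype.sum_prod_type]
  exact Finset.sum_comm

/-- Real scalar action on complex matrices is complex-coercion action. -/
lemma real_smul_matrix {α : Type*} (a : ℝ) (X : Matrix α α ℂ) :
    a • X = (a : ℂ) • X := by
  ext i j
  simp [Matrix.smul_apply, Complex.real_smul]


lemma trB_add {m n : ℕ} (X Y : Matrix (Fin m × Fin n) (Fin m × Fin n) ℂ) :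
    trB (X + Y) = trB X + trB Y := map_add (trBL m n) X Y

lemma trB_smul {m n : ℕ} (c : ℂ) (X : Matrix (Fin m × Fin n) (Fin m × Fin n) ℂ) :
    trB (c • X) = c • trB X := map_smul (trBL m n) c X

lemma trA_add {m n : ℕ} (X Y : Matrix (Fin m × Fin n) (Fin m × Fin n) ℂ) :
    trA (X + Y) = trA X + trA Y := map_add (trAL m n) X Y

lemma trA_smul {m n : ℕ} (c : ℂ) (X : Matrix (Fin m × Fin n) (Fin m × Fin n) ℂ) :
    trA (c • X) = c • trA X := map_smul (trAL m n) c X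

lemma trB_sub {m n : ℕ} (X Y : Matrix (Fin m × Fin n) (Fin m × Fin n) ℂ) :
    trB (X - Y) = trB X - trB Y := map_sub (trBL m n) X Y

lemma trA_sub {m n : ℕ} (X Y : Matrix (Fin m × Fin n) (Fin m × Fin n) ℂ) :
    trA (X - Y) = trA X - trA Y := map_sub (trAL m n) X Y

lemma smul_mat_eq_zero {α : Type*} {c : ℂ} (hc : c ≠ 0) {X : Matrix α α ℂ}
    (h : c • X = 0) : X = 0 := by
  have h2 := congrArg (fun Y : Matrix α α ℂ => c⁻¹ • Y) h
  simpa [smul_smul, inv_mul_cancel₀ hc] using h2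

lemma real_smul_mat_eq_zero {α : Type*} {c : ℝ} (hc : c ≠ 0) {X : Matrix α α ℂ}
    (h : c • X = 0) : X = 0 := by
  have h2 := congrArg (fun Y : Matrix α α ℂ => c⁻¹ • Y) h
  simpa [smul_smul, inv_mul_cancel₀ hc] using h2

/-- The linear map reading off the entries of a matrix in a given block. -/
noncomputable def entryMap {α : Type*} [Fintype α] (P : α → Prop) :
    Matrix α α ℂ →ₗ[ℂ] ({i // P i} × {i // P i} → ℂ) where
  toFun M := fun p => M p.1.1 p.2.1
  map_add' X Y := by funext p; simp [Matrix.add_apply]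
  map_smul' c X := by funext p; simp [Matrix.smul_apply]

/-- If `K` is Hermitian, then `1 + s • K` is positive semidefinite for `s` small. -/
lemma one_add_small_smul_posSemidef {α : Type*} [Fintype α] [DecidableEq α]
    {K : Matrix α α ℂ} (hK : K.IsHermitian) (s : ℝ)
    (hs : |s| ≤ (1 + ∑ i, |hK.eigenvalues i|)⁻¹) :
    ((1 : Matrix α α ℂ) + (s : ℂ) • K).PosSemidef := by
  set μ := hK.eigenvalues with hμ
  set cs := ∑ i, |μ i| with hcs
  have hcs0 : 0 ≤ cs := Finset.sum_nonneg fun i _ => abs_nonneg _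
  set Wc : Matrix α α ℂ := (hK.eigenvectorUnitary : Matrix α α ℂ) with hWc
  have hW1 : Wc * star Wc = 1 := (Matrix.mem_unitaryGroup_iff).mp hK.eigenvectorUnitary.2
  have hspec : K = Wc * diagonal (RCLike.ofReal ∘ μ) * star Wc := hK.spectral_theorem
  have hform : (1 : Matrix α α ℂ) + (s : ℂ) • K
      = Wc * diagonal (fun i => ((1 + s * μ i : ℝ) : ℂ)) * star Wc := by
    have hdiag : (diagonal (fun i => ((1 + s * μ i : ℝ) : ℂ)) : Matrix α α ℂ)
        = 1 + (s : ℂ) • diagonal (RCLike.ofReal ∘ μ) := by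
      ext i j
      rcases eq_or_ne i j with h | h
      · subst h
        simp only [Matrix.diagonal_apply_eq, Matrix.add_apply, Matrix.smul_apply,
          Matrix.one_apply_eq, Function.comp_apply, smul_eq_mul]
        rw [Complex.ofReal_add, Complex.ofReal_mul, Complex.ofReal_one]
        rfl
      · simp [Matrix.diagonal_apply_ne _ h, Matrix.one_apply_ne h]
    rw [hdiag, Matrix.mul_add, Matrix.add_mul, Matrix.mul_one, hW1,
      Matrix.mul_smul, Matrix.smul_mul, ← hspec]
  rw [hform]
  have hdiagPSD : (diagonal (fun i => ((1 + s * μ i : ℝ) : ℂ))).PosSemidef := by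
    refine Matrix.posSemidef_diagonal_iff.mpr fun i => ?_
    rw [Complex.zero_le_real]
    have h1 : |μ i| ≤ cs := by
      rw [hcs]
      exact Finset.single_le_sum (fun j _ => abs_nonneg (μ j)) (Finset.mem_univ i)
    have h2 : |s * μ i| ≤ (1 + cs)⁻¹ * cs := by
      rw [abs_mul]
      exact mul_le_mul hs h1 (abs_nonneg _) (by positivity)
    have h3 : (1 + cs)⁻¹ * cs ≤ 1 := by
      rw [← div_eq_inv_mul, div_le_one (by positivity)]
      linarith
    have h4 := neg_abs_le (s * μ i)
    linarith
  have := hdiagPSD.mul_mul_conjTranspose_same Wc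
  rwa [← Matrix.star_eq_conjTranspose] at this

set_option maxHeartbeats 2000000 in
/-- an extreme point of the coupling set has rank at most
`√(m² + n² − 1)`. -/
theorem extreme_point_rank_bound (m n : ℕ)
    (ρA : Matrix (Fin m) (Fin m) ℂ) (ρB : Matrix (Fin n) (Fin n) ℂ)
    (hA : IsDensityMatrix ρA) (hB : IsDensityMatrix ρB)
    (R : Matrix (Fin m × Fin n) (Fin m × Fin n) ℂ)
    (hR : R ∈ QCouplings ρA ρB)
    (hext : ∀ R₁ R₂, R₁ ∈ QCouplings ρA ρB → R₂ ∈ QCouplings ρA ρB →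
      ∀ a : ℝ, 0 < a → a < 1 → R = a • R₁ + (1 - a) • R₂ → R₁ = R ∧ R₂ = R) :
    R.rank ^ 2 ≤ m ^ 2 + n ^ 2 - 1 := by
  classical
  obtain ⟨⟨hPSD, hTr⟩, hTrB, hTrA⟩ := hR
  by_contra hcon
  push_neg at hcon
  -- m, n are positive
  have hm : 0 < m := by
    rcases Nat.eq_zero_or_pos m with h | h
    · exfalso; subst h
      have := hA.2
      simp [Matrix.trace] at this
    · exact h
  have hn : 0 < n := by
    rcases Nat.eq_zero_or_pos n with h | h
    · exfalso; subst h
      have := hB.2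
      simp [Matrix.trace] at this
    · exact h
  have hmn : m * m + n * n ≤ R.rank * R.rank := by
    have h0 : 0 < m ^ 2 := pow_pos hm 2
    have h1 : m ^ 2 + n ^ 2 ≤ R.rank ^ 2 := by omega
    simpa [pow_two] using h1
  -- the square root of R
  obtain ⟨S, hSps, hSS⟩ : ∃ S' : Matrix (Fin m × Fin n) (Fin m × Fin n) ℂ,
      S'.PosSemidef ∧ S' * S' = R :=
    by open scoped MatrixOrder in
      exact ⟨CFC.sqrt R, (CFC.sqrt_nonneg R).posSemidef, CFC.sqrt_mul_sqrt_self R hPSD.nonneg⟩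
  have hSH : S.IsHermitian := hSps.1
  have hrankS : S.rank = R.rank := by
    have h' : Sᴴ * S = R := by rw [hSH.eq]; exact hSS
    rw [← h']
    exact (Matrix.rank_conjTranspose_mul_self S).symm
  -- spectral data of S
  obtain ⟨Vc, dd, hV1, hV2, hspec, hcardt⟩ :
      ∃ (Vc : Matrix (Fin m × Fin n) (Fin m × Fin n) ℂ) (dd : (Fin m × Fin n) → ℂ),
        Vc * star Vc = 1 ∧ star Vc * Vc = 1 ∧ S = Vc * diagonal dd * star Vc ∧
        Fintype.card {i : Fin m × Fin n // dd i ≠ 0} = R.rank := by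
    refine ⟨(hSH.eigenvectorUnitary : Matrix (Fin m × Fin n) (Fin m × Fin n) ℂ),
      RCLike.ofReal ∘ hSH.eigenvalues,
      (Matrix.mem_unitaryGroup_iff).mp hSH.eigenvectorUnitary.2,
      (Matrix.mem_unitaryGroup_iff').mp hSH.eigenvectorUnitary.2,
      hSH.spectral_theorem, ?_⟩
    rw [← hrankS, hSH.rank_eq_card_non_zero_eigs]
    exact Fintype.card_congr (Equiv.subtypeEquivRight fun i => by
      simp [Function.comp, RCLike.ofReal_ne_zero])
  -- the relevant linear maps
  set L : Matrix (Fin m × Fin n) (Fin m × Fin n) ℂ →ₗ[ℂ] Matrix (Fin m × Fin n) (Fin m × Fin n) ℂ :=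
    (LinearMap.mulLeft ℂ S).comp (LinearMap.mulRight ℂ S) with hLdef
  set L' : Matrix (Fin m × Fin n) (Fin m × Fin n) ℂ →ₗ[ℂ] Matrix (Fin m × Fin n) (Fin m × Fin n) ℂ :=
    (LinearMap.mulLeft ℂ (diagonal dd)).comp (LinearMap.mulRight ℂ (diagonal dd)) with hL'def
  set π : Matrix (Fin m × Fin n) (Fin m × Fin n) ℂ →ₗ[ℂ]
      ({i : Fin m × Fin n // dd i ≠ 0} × {i : Fin m × Fin n // dd i ≠ 0} → ℂ) :=
    entryMap (fun i => dd i ≠ 0) with hπdef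
  -- the kernels of `L'` and `π` agree
  have hkers : LinearMap.ker L' = LinearMap.ker π := by
    ext M
    simp only [LinearMap.mem_ker]
    constructor
    · intro h
      funext p
      have h0 : (diagonal dd * (M * diagonal dd)) p.1.1 p.2.1 = 0 := by
        have : L' M = diagonal dd * (M * diagonal dd) := rfl
        rw [← this, h]
        rfl
      rw [Matrix.diagonal_mul, Matrix.mul_diagonal] at h0
      have : π M p = M p.1.1 p.2.1 := rfl
      rw [this]
      rcases mul_eq_zero.mp h0 with h' | h'
      · exact absurd h' p.1.2
      · rcases mul_eq_zero.mp h' with h'' | h''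
        · exact h''
        · exact absurd h'' p.2.2
    · intro h
      have : L' M = diagonal dd * (M * diagonal dd) := rfl
      rw [this]
      ext i j
      rw [Matrix.diagonal_mul, Matrix.mul_diagonal]
      by_cases hi : dd i = 0
      · simp [hi]
      by_cases hj : dd j = 0
      · simp [hj]
      · have h0 : π M (⟨i, hi⟩, ⟨j, hj⟩) = 0 := by rw [h]; rfl
        have h1 : M i j = 0 := h0
        simp [h1]
  -- π is surjective
  have hπsurj : Function.Surjective π := by
    intro f
    refine ⟨Matrix.of fun i j =>
      if hi : dd i ≠ 0 then
        (if hj : dd j ≠ 0 then f (⟨i, hi⟩, ⟨j, hj⟩) else 0)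
      else 0, ?_⟩
    funext p
    obtain ⟨⟨i, hi⟩, ⟨j, hj⟩⟩ := p
    show (Matrix.of _ : Matrix (Fin m × Fin n) (Fin m × Fin n) ℂ) i j = _
    simp [hi, hj]
  -- rank of L'
  have e1 := LinearMap.finrank_range_add_finrank_ker L'
  have e2 := LinearMap.finrank_range_add_finrank_ker π
  rw [hkers] at e1
  rw [LinearMap.range_eq_top.mpr hπsurj] at e2
  have e3 : Module.finrank ℂ (LinearMap.range L') = R.rank * R.rank := by
    have e4 : Module.finrank ℂ
        (⊤ : Submodule ℂ ({i : Fin m × Fin n // dd i ≠ 0}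
          × {i : Fin m × Fin n // dd i ≠ 0} → ℂ)) = R.rank * R.rank := by
      rw [finrank_top, Module.finrank_pi, Fintype.card_prod, hcardt]
    rw [e4] at e2
    omega
  -- conjugation by the unitary Vc, as a linear equivalence
  have hmulcan1 : ∀ X : Matrix (Fin m × Fin n) (Fin m × Fin n) ℂ, Vc * (star Vc * X) = X := by
    intro X; rw [← mul_assoc, hV1, one_mul]
  have hmulcan2 : ∀ X : Matrix (Fin m × Fin n) (Fin m × Fin n) ℂ, star Vc * (Vc * X) = X := by
    intro X; rw [← mul_assoc, hV2, one_mul]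
  have hmulcan3 : ∀ X : Matrix (Fin m × Fin n) (Fin m × Fin n) ℂ, X * Vc * star Vc = X := by
    intro X; rw [mul_assoc, hV1, mul_one]
  have hmulcan4 : ∀ X : Matrix (Fin m × Fin n) (Fin m × Fin n) ℂ, X * star Vc * Vc = X := by
    intro X; rw [mul_assoc, hV2, mul_one]
  set cf : Matrix (Fin m × Fin n) (Fin m × Fin n) ℂ →ₗ[ℂ] Matrix (Fin m × Fin n) (Fin m × Fin n) ℂ :=
    (LinearMap.mulLeft ℂ Vc).comp (LinearMap.mulRight ℂ (star Vc)) with hcf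
  set cg : Matrix (Fin m × Fin n) (Fin m × Fin n) ℂ →ₗ[ℂ] Matrix (Fin m × Fin n) (Fin m × Fin n) ℂ :=
    (LinearMap.mulLeft ℂ (star Vc)).comp (LinearMap.mulRight ℂ Vc) with hcg
  have hfg : cf.comp cg = LinearMap.id := by
    apply LinearMap.ext
    intro X
    show Vc * ((star Vc * (X * Vc)) * star Vc) = X
    rw [← mul_assoc, hmulcan1, hmulcan3]
  have hgf : cg.comp cf = LinearMap.id := by
    apply LinearMap.ext
    intro X
    show star Vc * ((Vc * (X * star Vc)) * Vc) = X
    rw [← mul_assoc, hmulcan2, hmulcan4]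
  set cV : Matrix (Fin m × Fin n) (Fin m × Fin n) ℂ ≃ₗ[ℂ] Matrix (Fin m × Fin n) (Fin m × Fin n) ℂ :=
    LinearEquiv.ofLinear cf cg hfg hgf with hcV
  have hLdec : L = (cV.toLinearMap.comp L').comp (cV.symm.toLinearMap) := by
    apply LinearMap.ext
    intro X
    show S * (X * S) = Vc * ((diagonal dd * ((star Vc * (X * Vc)) * diagonal dd)) * star Vc)
    rw [hspec]
    simp only [mul_assoc]
  have hrangeL : Module.finrank ℂ (LinearMap.range L) = R.rank * R.rank := by
    calc Module.finrank ℂ (LinearMap.range L)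
        = Module.finrank ℂ (Submodule.map cV.toLinearMap (LinearMap.range L')) := by
          rw [hLdec, LinearMap.range_comp_of_range_eq_top _ (LinearEquiv.range cV.symm),
            LinearMap.range_comp]
      _ = Module.finrank ℂ (LinearMap.range L') := LinearEquiv.finrank_map_eq cV _
      _ = R.rank * R.rank := e3
  -- the constraint map and the trace functional
  set T : Matrix (Fin m × Fin n) (Fin m × Fin n) ℂ →ₗ[ℂ]
      (Matrix (Fin m) (Fin m) ℂ × Matrix (Fin n) (Fin n) ℂ) :=
    (trBL m n).prod (trAL m n) with hT
  set φ : (Matrix (Fin m) (Fin m) ℂ × Matrix (Fin n) (Fin n) ℂ) →ₗ[ℂ] ℂ :=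
    ((Matrix.traceLinearMap (Fin m) ℂ ℂ).comp (LinearMap.fst ℂ _ _))
      - ((Matrix.traceLinearMap (Fin n) ℂ ℂ).comp (LinearMap.snd ℂ _ _)) with hφ
  have hφsurj : LinearMap.range φ = ⊤ := by
    rw [LinearMap.range_eq_top]
    intro c
    refine ⟨(((c / m) : ℂ) • 1, 0), ?_⟩
    have : φ (((c / m : ℂ) • 1, 0)) = ((c / m : ℂ) • (1 : Matrix (Fin m) (Fin m) ℂ)).trace
        - (0 : Matrix (Fin n) (Fin n) ℂ).trace := rfl
    rw [this, Matrix.trace_zero, Matrix.trace_smul, Matrix.trace_one, sub_zero, smul_eq_mul,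
      Fintype.card_fin]
    field_simp
  have eφ := LinearMap.finrank_range_add_finrank_ker φ
  rw [hφsurj, finrank_top, Module.finrank_self] at eφ
  have hprod : Module.finrank ℂ (Matrix (Fin m) (Fin m) ℂ × Matrix (Fin n) (Fin n) ℂ)
      = m * m + n * n := by
    rw [Module.finrank_prod, Module.finrank_matrix, Module.finrank_matrix,
      Module.finrank_self, Fintype.card_fin, Fintype.card_fin, mul_one, mul_one]
  rw [hprod] at eφ
  -- restrict T to the range of L
  have hsub : LinearMap.range (T.domRestrict (LinearMap.range L)) ≤ LinearMap.ker φ := by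
    rintro y ⟨w, rfl⟩
    rw [LinearMap.mem_ker]
    have : φ (T.domRestrict (LinearMap.range L) w)
        = (trB (w : Matrix (Fin m × Fin n) (Fin m × Fin n) ℂ)).trace
          - (trA (w : Matrix (Fin m × Fin n) (Fin m × Fin n) ℂ)).trace := rfl
    rw [this, trace_trB, trace_trA, sub_self]
  have hT2 := LinearMap.finrank_range_add_finrank_ker (T.domRestrict (LinearMap.range L))
  have hle : Module.finrank ℂ (LinearMap.range (T.domRestrict (LinearMap.range L)))
      ≤ Module.finrank ℂ (LinearMap.ker φ) := Submodule.finrank_mono hsub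
  have hm1 : 1 ≤ m * m := Nat.one_le_iff_ne_zero.mpr (Nat.mul_ne_zero hm.ne' hm.ne')
  have hkerpos : 0 < Module.finrank ℂ
      (LinearMap.ker (T.domRestrict (LinearMap.range L))) := by
    rw [hrangeL] at hT2
    omega
  have hker_ne : LinearMap.ker (T.domRestrict (LinearMap.range L)) ≠ ⊥ := by
    intro h
    rw [h, finrank_bot] at hkerpos
    omega
  obtain ⟨w, hwker, hwne⟩ := (Submodule.ne_bot_iff _).mp hker_ne
  have hHne : (w : Matrix (Fin m × Fin n) (Fin m × Fin n) ℂ) ≠ 0 := by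
    intro h
    exact hwne (Subtype.ext h)
  have hTw : T (w : Matrix (Fin m × Fin n) (Fin m × Fin n) ℂ) = 0 := by
    have := LinearMap.mem_ker.mp hwker
    rwa [LinearMap.domRestrict_apply] at this
  have hwB : trB (w : Matrix (Fin m × Fin n) (Fin m × Fin n) ℂ) = 0 := congrArg Prod.fst hTw
  have hwA : trA (w : Matrix (Fin m × Fin n) (Fin m × Fin n) ℂ) = 0 := congrArg Prod.snd hTw
  obtain ⟨K, hK⟩ := w.2
  have hKw : S * (K * S) = (w : Matrix (Fin m × Fin n) (Fin m × Fin n) ℂ) := hK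
  -- conjugation identity
  have hConj : ∀ X : Matrix (Fin m × Fin n) (Fin m × Fin n) ℂ,
      (S * (X * S))ᴴ = S * (Xᴴ * S) := by
    intro X
    rw [Matrix.conjTranspose_mul, Matrix.conjTranspose_mul, hSH.eq, ← mul_assoc]
  -- extract a nonzero Hermitian element
  obtain ⟨H₀, K₀, hH0ne, hH0eq, hK0H, hH0B, hH0A⟩ :
      ∃ (H₀ K₀ : Matrix (Fin m × Fin n) (Fin m × Fin n) ℂ),
        H₀ ≠ 0 ∧ H₀ = S * (K₀ * S) ∧ K₀.IsHermitian ∧ trB H₀ = 0 ∧ trA H₀ = 0 := by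
    by_cases h1 : (1/2 : ℂ) • ((w : Matrix (Fin m × Fin n) (Fin m × Fin n) ℂ)
        + (w : Matrix (Fin m × Fin n) (Fin m × Fin n) ℂ)ᴴ) = 0
    · refine ⟨(Complex.I/2) • ((w : Matrix (Fin m × Fin n) (Fin m × Fin n) ℂ)ᴴ
          - (w : Matrix (Fin m × Fin n) (Fin m × Fin n) ℂ)),
        (Complex.I/2) • (Kᴴ - K), ?_, ?_, ?_, ?_, ?_⟩
      · intro h2
        apply hHne
        have e1 : (w : Matrix (Fin m × Fin n) (Fin m × Fin n) ℂ)
            + (w : Matrix (Fin m × Fin n) (Fin m × Fin n) ℂ)ᴴ = 0 :=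
          smul_mat_eq_zero (c := (1/2 : ℂ)) (by norm_num) h1
        have e2 : (w : Matrix (Fin m × Fin n) (Fin m × Fin n) ℂ)ᴴ
            - (w : Matrix (Fin m × Fin n) (Fin m × Fin n) ℂ) = 0 :=
          smul_mat_eq_zero (c := (Complex.I/2 : ℂ)) (by simp [div_eq_zero_iff, Complex.I_ne_zero]) h2
        have hww := sub_eq_zero.mp e2
        rw [hww] at e1
        have e3 : (2 : ℂ) • (w : Matrix (Fin m × Fin n) (Fin m × Fin n) ℂ) = 0 := by
          rw [two_smul]
          exact e1
        exact smul_mat_eq_zero (c := (2 : ℂ)) (by norm_num) e3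
      · rw [← hKw, hConj, Matrix.smul_mul, Matrix.mul_smul, Matrix.sub_mul, Matrix.mul_sub]
      · show ((Complex.I/2) • (Kᴴ - K))ᴴ = (Complex.I/2) • (Kᴴ - K)
        have hst : star (Complex.I/2) = -(Complex.I/2) := by
          simp [Complex.star_def, map_div₀]
          ring
        rw [Matrix.conjTranspose_smul, Matrix.conjTranspose_sub,
          Matrix.conjTranspose_conjTranspose, hst, neg_smul, ← smul_neg, neg_sub]
      · rw [trB_smul, trB_sub, trB_conjT, hwB]
        simp
      · rw [trA_smul, trA_sub, trA_conjT, hwA]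
        simp
    · refine ⟨(1/2 : ℂ) • ((w : Matrix (Fin m × Fin n) (Fin m × Fin n) ℂ)
          + (w : Matrix (Fin m × Fin n) (Fin m × Fin n) ℂ)ᴴ),
        (1/2 : ℂ) • (K + Kᴴ), h1, ?_, ?_, ?_, ?_⟩
      · rw [← hKw, hConj, Matrix.smul_mul, Matrix.mul_smul, Matrix.add_mul, Matrix.mul_add]
      · show ((1/2 : ℂ) • (K + Kᴴ))ᴴ = (1/2 : ℂ) • (K + Kᴴ)
        have hst : star (1/2 : ℂ) = (1/2 : ℂ) := by
          simp
        rw [Matrix.conjTranspose_smul, Matrix.conjTranspose_add,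
          Matrix.conjTranspose_conjTranspose, hst, add_comm Kᴴ K]
      · rw [trB_smul, trB_add, trB_conjT, hwB]
        simp
      · rw [trA_smul, trA_add, trA_conjT, hwA]
        simp
  -- a small perturbation stays in the coupling set
  obtain ⟨ε, hε, hPSDpm⟩ : ∃ ε : ℝ, 0 < ε ∧ ∀ a : ℝ, |a| ≤ ε →
      ((1 : Matrix (Fin m × Fin n) (Fin m × Fin n) ℂ) + (a : ℂ) • K₀).PosSemidef :=
    ⟨(1 + ∑ i, |hK0H.eigenvalues i|)⁻¹, by positivity,
      fun a ha => one_add_small_smul_posSemidef hK0H a ha⟩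
  have hmem : ∀ a : ℝ, |a| ≤ ε → (R + a • H₀) ∈ QCouplings ρA ρB := by
    intro a ha
    have hPSD' := hPSDpm a ha
    have hRform : R + a • H₀
        = Sᴴ * ((1 : Matrix (Fin m × Fin n) (Fin m × Fin n) ℂ) + (a : ℂ) • K₀) * S := by
      rw [hSH.eq, Matrix.mul_add, Matrix.add_mul, Matrix.mul_one, hSS, real_smul_matrix, hH0eq,
        Matrix.mul_smul, Matrix.smul_mul, mul_assoc]
    refine ⟨⟨?_, ?_⟩, ?_, ?_⟩
    · rw [hRform]
      exact hPSD'.conjTranspose_mul_mul_same S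
    · rw [real_smul_matrix, Matrix.trace_add, Matrix.trace_smul, hTr]
      have h0 : H₀.trace = 0 := by rw [← trace_trB, hH0B, Matrix.trace_zero]
      rw [h0]
      simp
    · show trB (R + a • H₀) = ρA
      rw [real_smul_matrix, trB_add, trB_smul, hH0B, hTrB]
      simp
    · show trA (R + a • H₀) = ρB
      rw [real_smul_matrix, trA_add, trA_smul, hH0A, hTrA]
      simp
  -- extremality gives a contradiction
  have h12 : R = (1/2 : ℝ) • (R + ε • H₀) + (1 - (1/2 : ℝ)) • (R + (-ε) • H₀) := by
    module
  obtain ⟨hR1, -⟩ := hext (R + ε • H₀) (R + (-ε) • H₀)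
    (hmem ε (by rw [abs_of_pos hε]))
    (hmem (-ε) (by rw [abs_neg, abs_of_pos hε]))
    (1/2) (by norm_num) (by norm_num) h12
  have hz : ε • H₀ = 0 := add_left_cancel (hR1.trans (add_zero R).symm)
  exact hH0ne (real_smul_mat_eq_zero hε.ne' hz)
end
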